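/- arXiv:1303.0669 — 2 statements merged into one kernel-verified Lean document; each statement's English description precedes it below -/
import Mathlib

section
/- Let P and Q be probability distributions on finite sets with H(Q) > 0, and let a > 0. If a < H(P)/H(Q), then lim_{n→∞} F^D(P^n → Q^{⌊an⌋}) = lim_{n→∞} F^M(P^n → Q^{⌊an⌋}) = 1; if a > H(P)/H(Q), then lim_{n→∞} F^D(P^n → Q^{⌊an⌋}) = lim_{n→∞} F^M(P^n → Q^{⌊an⌋}) = 0 (in particular all these limits exist). -/
open MeasureTheory Filter

namespace RNG

variable {α β : Type*}

/-- `P` is a probability distribution on the finite set `α`. -/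
def IsProb [Fintype α] (P : α → ℝ) : Prop :=
  (∀ x, 0 ≤ P x) ∧ ∑ x, P x = 1

open Classical in
/-- Pushforward distribution `W(P)(y) = ∑_{x : W x = y} P x`. -/
noncomputable def push [Fintype α] (W : α → β) (P : α → ℝ) : β → ℝ :=
  fun y => ∑ x, if W x = y then P x else 0

/-- Fidelity (Bhattacharyya coefficient) between distributions on the same finite set. -/
noncomputable def fid [Fintype β] (R S : β → ℝ) : ℝ :=
  ∑ y, Real.sqrt (R y * S y)

/-- Sum of the `l` largest values of `P`, i.e. the `l`-th partial sum of the
decreasing rearrangement of `P` (padded with zeros). -/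
noncomputable def topSum [Fintype α] (P : α → ℝ) (l : ℕ) : ℝ :=
  sSup {s : ℝ | ∃ A : Finset α, A.card ≤ l ∧ s = ∑ x ∈ A, P x}

/-- Majorization `P ≺ P'` (the distributions may live on different finite sets). -/
def Maj [Fintype α] [Fintype β] (P : α → ℝ) (P' : β → ℝ) : Prop :=
  ∀ l : ℕ, topSum P l ≤ topSum P' l

/-- Maximal fidelity under deterministic transformations,
`F^D(P → Q) = max {F(W(P), Q) | W : α → β}`. -/
noncomputable def FD [Fintype α] [Fintype β] (P : α → ℝ) (Q : β → ℝ) : ℝ :=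
  sSup {r : ℝ | ∃ W : α → β, r = fid (push W P) Q}

/-- Maximal fidelity under the majorization condition,
`F^M(P → Q) = max {F(P', Q) | P ≺ P', P'` a distribution on the target set`}`. -/
noncomputable def FM [Fintype α] [Fintype β] (P : α → ℝ) (Q : β → ℝ) : ℝ :=
  sSup {r : ℝ | ∃ P' : β → ℝ, IsProb P' ∧ Maj P P' ∧ r = fid P' Q}

/-- Shannon entropy (natural logarithm). -/
noncomputable def H [Fintype α] (P : α → ℝ) : ℝ := ∑ x, -(P x * Real.log (P x))

/-- Varentropy `V(P)` (natural logarithm). -/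
noncomputable def V [Fintype α] (P : α → ℝ) : ℝ :=
  ∑ x, P x * (-Real.log (P x) - H P) ^ 2

/-- Shannon entropy, base-2 logarithm. -/
noncomputable def H2 [Fintype α] (P : α → ℝ) : ℝ := ∑ x, -(P x * Real.logb 2 (P x))

/-- Varentropy, base-2 logarithm. -/
noncomputable def V2 [Fintype α] (P : α → ℝ) : ℝ :=
  ∑ x, P x * (-Real.logb 2 (P x) - H2 P) ^ 2

/-- The `n`-fold i.i.d. product distribution `P^n`. -/
noncomputable def iid [Fintype α] (P : α → ℝ) (n : ℕ) : (Fin n → α) → ℝ :=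
  fun f => ∏ i, P (f i)

/-- The uniform distribution on a two-element set. -/
noncomputable def U2 : Fin 2 → ℝ := fun _ => 1 / 2

/-- Density of the normal distribution `N(m, v)`. -/
noncomputable def normalPDF (m v t : ℝ) : ℝ :=
  (Real.sqrt (2 * Real.pi * v))⁻¹ * Real.exp (-(t - m) ^ 2 / (2 * v))

/-- Standard normal cumulative distribution function `G`. -/
noncomputable def stdG (x : ℝ) : ℝ := ∫ t in Set.Iic x, normalPDF 0 1 t

/-- Density `N_P` of `N(0, V(P))`. -/
noncomputable def NP [Fintype α] (P : α → ℝ) (x : ℝ) : ℝ := normalPDF 0 (V P) x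

/-- Density `N_{P,Q,b}` of `N(H(Q)b, (H(P)/H(Q))·V(Q))`. -/
noncomputable def NPQ [Fintype α] [Fintype β] (P : α → ℝ) (Q : β → ℝ) (b x : ℝ) : ℝ :=
  normalPDF (H Q * b) (H P / H Q * V Q) x

/-- Cdf `G_P(x) = G(x/√V(P))`. -/
noncomputable def GP [Fintype α] (P : α → ℝ) (x : ℝ) : ℝ := stdG (x / Real.sqrt (V P))

/-- Cdf `G_{P,Q,b}(x) = G(√(H(Q)/(H(P)V(Q)))·(x − H(Q)b))`. -/
noncomputable def GPQ [Fintype α] [Fintype β] (P : α → ℝ) (Q : β → ℝ) (b x : ℝ) : ℝ :=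
  stdG (Real.sqrt (H Q / (H P * V Q)) * (x - H Q * b))

/-- `I_{P,Q,b}(x) = ∫_{−∞}^x √(N_P(t) N_{P,Q,b}(t)) dt`. -/
noncomputable def IPQ [Fintype α] [Fintype β] (P : α → ℝ) (Q : β → ℝ) (b x : ℝ) : ℝ :=
  ∫ t in Set.Iic x, Real.sqrt (NP P t * NPQ P Q b t)

/-- `I_{P,Q,b}(∞) = ∫_ℝ √(N_P(t) N_{P,Q,b}(t)) dt`. -/
noncomputable def IPQinf [Fintype α] [Fintype β] (P : α → ℝ) (Q : β → ℝ) (b : ℝ) : ℝ :=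
  ∫ t : ℝ, Real.sqrt (NP P t * NPQ P Q b t)

/-- `L^D_n(P,Q|ν)`: the maximal `L` with `F^D(P^n → Q^L) ≥ ν`. -/
noncomputable def LD [Fintype α] [Fintype β] (P : α → ℝ) (Q : β → ℝ) (ν : ℝ) (n : ℕ) : ℕ :=
  sSup {L : ℕ | ν ≤ FD (iid P n) (iid Q L)}

/-- The optimal second order rate `R^D_2(P,Q|ν)`. -/
noncomputable def RD2 [Fintype α] [Fintype β] (P : α → ℝ) (Q : β → ℝ) (ν : ℝ) : ℝ :=
  sSup {b : ℝ | ∃ c : ℝ, ν ≤ c ∧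
    Tendsto (fun n : ℕ =>
      FD (iid P n) (iid Q (⌊H P / H Q * n + b * Real.sqrt n⌋₊))) atTop (nhds c)}

section Aux

open Finset

variable {γ δ : Type*}

lemma le_sqrt_mul {a b m : ℝ} (hm : 0 ≤ m) (ha : m ≤ a) (hb : m ≤ b) :
    m ≤ Real.sqrt (a * b) := by
  have h1 : m * m ≤ a * b := mul_le_mul ha hb hm (hm.trans ha)
  calc m = Real.sqrt (m * m) := (Real.sqrt_mul_self hm).symm
    _ ≤ _ := Real.sqrt_le_sqrt h1

lemma sum_sqrt_mul_le {s : Finset γ} {f g : γ → ℝ}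
    (hf : ∀ y, 0 ≤ f y) (hg : ∀ y, 0 ≤ g y) :
    ∑ y ∈ s, Real.sqrt (f y * g y) ≤ Real.sqrt ((∑ y ∈ s, f y) * (∑ y ∈ s, g y)) := by
  have h0 : 0 ≤ ∑ y ∈ s, Real.sqrt (f y * g y) := sum_nonneg fun y _ => Real.sqrt_nonneg _
  have hy : 0 ≤ (∑ y ∈ s, f y) * (∑ y ∈ s, g y) :=
    mul_nonneg (sum_nonneg fun y _ => hf y) (sum_nonneg fun y _ => hg y)
  rw [Real.le_sqrt h0 hy]
  calc (∑ y ∈ s, Real.sqrt (f y * g y))^2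
      = (∑ y ∈ s, Real.sqrt (f y) * Real.sqrt (g y))^2 := by
        congr 1
        exact sum_congr rfl fun y _ => Real.sqrt_mul (hf y) _
    _ ≤ (∑ y ∈ s, Real.sqrt (f y)^2) * (∑ y ∈ s, Real.sqrt (g y)^2) :=
        Finset.sum_mul_sq_le_sq_mul_sq _ _ _
    _ = _ := by
        rw [sum_congr rfl fun y (_ : y ∈ s) => Real.sq_sqrt (hf y),
          sum_congr rfl fun y (_ : y ∈ s) => Real.sq_sqrt (hg y)]

lemma fid_nonneg [Fintype γ] (R S : γ → ℝ) : 0 ≤ fid R S :=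
  sum_nonneg fun y _ => Real.sqrt_nonneg _

lemma fid_le_one [Fintype γ] {R S : γ → ℝ} (hR : IsProb R) (hS : IsProb S) : fid R S ≤ 1 := by
  have h := sum_sqrt_mul_le (s := (univ : Finset γ)) hR.1 hS.1
  rw [hR.2, hS.2] at h
  simpa [fid] using h

lemma prob_nonempty [Fintype γ] {P : γ → ℝ} (hP : IsProb P) : Nonempty γ := by
  by_contra h
  rw [not_nonempty_iff] at h
  have := hP.2
  rw [Finset.univ_eq_empty, Finset.sum_empty] at this
  norm_num at this

lemma prob_le_one [Fintype γ] {P : γ → ℝ} (hP : IsProb P) (x : γ) : P x ≤ 1 := by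
  rw [← hP.2]
  exact Finset.single_le_sum (fun y _ => hP.1 y) (mem_univ x)

lemma H_nonneg [Fintype γ] {P : γ → ℝ} (hP : IsProb P) : 0 ≤ H P := by
  apply sum_nonneg
  intro x _
  rcases eq_or_lt_of_le (hP.1 x) with h | h
  · simp [← h]
  · have : Real.log (P x) ≤ 0 := Real.log_nonpos h.le (prob_le_one hP x)
    nlinarith

lemma sum_iid [Fintype γ] {P : γ → ℝ} (hP : IsProb P) (n : ℕ) :
    ∑ x : Fin n → γ, iid P n x = 1 := by
  classical
  have h := Finset.prod_univ_sum (fun _ : Fin n => (univ : Finset γ)) (fun _ a => P a)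
  rw [Fintype.piFinset_univ] at h
  have : ∑ x : Fin n → γ, iid P n x = ∏ _i : Fin n, ∑ a, P a := h.symm
  rw [this, hP.2, prod_const_one]

lemma isProb_iid [Fintype γ] {P : γ → ℝ} (hP : IsProb P) (n : ℕ) : IsProb (iid P n) :=
  ⟨fun x => prod_nonneg fun i _ => hP.1 (x i), sum_iid hP n⟩

end Aux

section Aux2

open Finset

variable {γ δ : Type*}

lemma push_nonneg [Fintype γ] {P : γ → ℝ} (hP0 : ∀ x, 0 ≤ P x) (W : γ → δ) (y : δ) :
    0 ≤ push W P y := by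
  unfold push
  refine sum_nonneg fun x _ => ?_
  split
  · exact hP0 x
  · exact le_rfl

lemma sum_le_push [Fintype γ] {P : γ → ℝ} (hP0 : ∀ x, 0 ≤ P x) {W : γ → δ} {y : δ}
    {A : Finset γ} (hA : ∀ x ∈ A, W x = y) : ∑ x ∈ A, P x ≤ push W P y := by
  classical
  unfold push
  calc ∑ x ∈ A, P x = ∑ x ∈ A, (if W x = y then P x else 0) :=
        sum_congr rfl fun x hx => (if_pos (hA x hx)).symm
    _ ≤ ∑ x, (if W x = y then P x else 0) := by
        apply sum_le_sum_of_subset_of_nonneg (subset_univ _)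
        intro x _ _
        split
        · exact hP0 x
        · exact le_rfl

lemma sum_push [Fintype γ] [Fintype δ] (W : γ → δ) (P : γ → ℝ) :
    ∑ y, push W P y = ∑ x, P x := by
  unfold push
  rw [Finset.sum_comm]
  apply sum_congr rfl
  intro x _
  rw [Finset.sum_eq_single (W x)]
  · exact if_pos rfl
  · intro y _ hy
    exact if_neg fun h => hy h.symm
  · intro h
    exact absurd (mem_univ _) h

lemma isProb_push [Fintype γ] [Fintype δ] {P : γ → ℝ} (hP : IsProb P) (W : γ → δ) :
    IsProb (push W P) :=
  ⟨push_nonneg hP.1 W, by rw [sum_push, hP.2]⟩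

lemma topSum_set_finite [Fintype γ] (P : γ → ℝ) (l : ℕ) :
    {s : ℝ | ∃ A : Finset γ, A.card ≤ l ∧ s = ∑ x ∈ A, P x}.Finite := by
  classical
  apply (Set.finite_range (fun A : Finset γ => ∑ x ∈ A, P x)).subset
  rintro s ⟨A, _, rfl⟩
  exact ⟨A, rfl⟩

lemma topSum_set_nonempty [Fintype γ] (P : γ → ℝ) (l : ℕ) :
    {s : ℝ | ∃ A : Finset γ, A.card ≤ l ∧ s = ∑ x ∈ A, P x}.Nonempty :=
  ⟨0, ∅, by simp⟩

lemma topSum_spec [Fintype γ] (P : γ → ℝ) (l : ℕ) :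
    ∃ A : Finset γ, A.card ≤ l ∧ topSum P l = ∑ x ∈ A, P x :=
  (topSum_set_nonempty P l).csSup_mem (topSum_set_finite P l)

lemma le_topSum [Fintype γ] (P : γ → ℝ) {l : ℕ} {A : Finset γ} (hA : A.card ≤ l) :
    ∑ x ∈ A, P x ≤ topSum P l :=
  le_csSup (topSum_set_finite P l).bddAbove ⟨A, hA, rfl⟩

lemma topSum_le [Fintype γ] (P : γ → ℝ) (l : ℕ) {c : ℝ}
    (h : ∀ A : Finset γ, A.card ≤ l → ∑ x ∈ A, P x ≤ c) : topSum P l ≤ c := by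
  apply csSup_le (topSum_set_nonempty P l)
  rintro s ⟨A, hA, rfl⟩
  exact h A hA

lemma maj_push [Fintype γ] [Fintype δ] {P : γ → ℝ} (hP0 : ∀ x, 0 ≤ P x) (W : γ → δ) :
    Maj P (push W P) := by
  classical
  intro l
  apply topSum_le
  intro A hA
  have h1 : ∑ x ∈ A, P x = ∑ y ∈ A.image W, ∑ x ∈ A.filter (fun x => W x = y), P x :=
    (Finset.sum_fiberwise_of_maps_to (fun x hx => Finset.mem_image_of_mem W hx) P).symm
  have h2 : ∑ y ∈ A.image W, ∑ x ∈ A.filter (fun x => W x = y), P x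
      ≤ ∑ y ∈ A.image W, push W P y := by
    apply sum_le_sum
    intro y _
    exact sum_le_push hP0 (fun x hx => (Finset.mem_filter.mp hx).2)
  calc ∑ x ∈ A, P x ≤ ∑ y ∈ A.image W, push W P y := h1 ▸ h2
    _ ≤ topSum (push W P) l := le_topSum _ (le_trans (Finset.card_image_le) hA)

lemma bddAbove_FDset [Fintype γ] [Fintype δ] (P : γ → ℝ) (Q : δ → ℝ) :
    BddAbove {r : ℝ | ∃ W : γ → δ, r = fid (push W P) Q} := by
  classical
  apply Set.Finite.bddAbove
  apply (Set.finite_range (fun W : γ → δ => fid (push W P) Q)).subset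
  rintro r ⟨W, rfl⟩
  exact ⟨W, rfl⟩

lemma le_FD [Fintype γ] [Fintype δ] (P : γ → ℝ) (Q : δ → ℝ) (W : γ → δ) :
    fid (push W P) Q ≤ FD P Q :=
  le_csSup (bddAbove_FDset P Q) ⟨W, rfl⟩

lemma FMset_nonempty [Fintype γ] [Fintype δ] [Nonempty δ] {P : γ → ℝ} (hP : IsProb P)
    (Q : δ → ℝ) :
    {r : ℝ | ∃ P' : δ → ℝ, IsProb P' ∧ Maj P P' ∧ r = fid P' Q}.Nonempty := by
  classical
  set W : γ → δ := fun _ => Classical.arbitrary δ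
  exact ⟨fid (push W P) Q, push W P, isProb_push hP W, maj_push hP.1 W, rfl⟩

lemma FM_le_one [Fintype γ] [Fintype δ] [Nonempty δ] {P : γ → ℝ} {Q : δ → ℝ}
    (hP : IsProb P) (hQ : IsProb Q) : FM P Q ≤ 1 := by
  apply csSup_le (FMset_nonempty hP Q)
  rintro r ⟨P', hP', _, rfl⟩
  exact fid_le_one hP' hQ

lemma FD_le_FM [Fintype γ] [Fintype δ] [Nonempty δ] {P : γ → ℝ} {Q : δ → ℝ}
    (hP : IsProb P) (hQ : IsProb Q) : FD P Q ≤ FM P Q := by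
  classical
  have hne : {r : ℝ | ∃ W : γ → δ, r = fid (push W P) Q}.Nonempty :=
    ⟨_, ⟨fun _ => Classical.arbitrary δ, rfl⟩⟩
  apply csSup_le hne
  rintro r ⟨W, rfl⟩
  apply le_csSup
  · exact ⟨1, by rintro r ⟨P', hP', _, rfl⟩; exact fid_le_one hP' hQ⟩
  · exact ⟨push W P, isProb_push hP W, maj_push hP.1 W, rfl⟩

lemma FD_nonneg [Fintype γ] [Fintype δ] [Nonempty δ] (P : γ → ℝ) (Q : δ → ℝ) :
    0 ≤ FD P Q := by
  classical
  exact le_trans (fid_nonneg _ _) (le_FD P Q (fun _ => Classical.arbitrary δ))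

lemma FD_le_one [Fintype γ] [Fintype δ] [Nonempty δ] {P : γ → ℝ} {Q : δ → ℝ}
    (hP : IsProb P) (hQ : IsProb Q) : FD P Q ≤ 1 := by
  classical
  have hne : {r : ℝ | ∃ W : γ → δ, r = fid (push W P) Q}.Nonempty :=
    ⟨_, ⟨fun _ => Classical.arbitrary δ, rfl⟩⟩
  apply csSup_le hne
  rintro r ⟨W, rfl⟩
  exact fid_le_one (isProb_push hP W) hQ

lemma FM_nonneg [Fintype γ] [Fintype δ] [Nonempty δ] {P : γ → ℝ} {Q : δ → ℝ}
    (hP : IsProb P) (hQ : IsProb Q) : 0 ≤ FM P Q := by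
  classical
  refine le_trans (fid_nonneg (push (fun _ => Classical.arbitrary δ) P) Q) (le_csSup ?_ ?_)
  · exact ⟨1, by rintro r ⟨P', hP', _, rfl⟩; exact fid_le_one hP' hQ⟩
  · exact ⟨push (fun _ => Classical.arbitrary δ) P, isProb_push hP _, maj_push hP.1 _, rfl⟩

end Aux2

section Aux3

open Finset

variable {γ : Type*}

lemma prod_eq_two_of {ι M : Type*} [CommMonoid M] [Fintype ι] [DecidableEq ι]
    {i j : ι} (hij : i ≠ j) (f : ι → M) (hf : ∀ k, k ≠ i → k ≠ j → f k = 1) :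
    ∏ k, f k = f i * f j := by
  rw [← Finset.prod_pair hij]
  refine (Finset.prod_subset (Finset.subset_univ _) ?_).symm
  intro k _ hk
  rw [Finset.mem_insert, Finset.mem_singleton] at hk
  push_neg at hk
  exact hf k hk.1 hk.2

lemma expect_pi [Fintype γ] (P : γ → ℝ) {n : ℕ} (F : Fin n → γ → ℝ) :
    ∑ x : Fin n → γ, (iid P n x * ∏ k, F k (x k)) = ∏ k, ∑ a, P a * F k a := by
  classical
  have h := Finset.prod_univ_sum (fun _ : Fin n => (univ : Finset γ))
    (fun k a => P a * F k a)
  rw [Fintype.piFinset_univ] at h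
  rw [h]
  apply sum_congr rfl
  intro x _
  rw [iid, ← Finset.prod_mul_distrib]

lemma expect_coord [Fintype γ] {P : γ → ℝ} (hP : IsProb P) {n : ℕ} (i : Fin n) (g : γ → ℝ) :
    ∑ x : Fin n → γ, iid P n x * g (x i) = ∑ a, P a * g a := by
  classical
  have key : ∑ x : Fin n → γ, (iid P n x * ∏ k, (if k = i then g (x k) else 1))
      = ∏ k, ∑ a, P a * (if k = i then g a else 1) :=
    expect_pi P (fun k a => if k = i then g a else 1)
  have h1 : ∀ x : Fin n → γ, (∏ k, (if k = i then g (x k) else 1)) = g (x i) := by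
    intro x
    rw [Finset.prod_ite_eq' univ i (fun k => g (x k))]
    simp
  have h2 : (∏ k : Fin n, ∑ a, P a * (if k = i then g a else 1)) = ∑ a, P a * g a := by
    have h3 : ∀ k : Fin n, (∑ a, P a * (if k = i then g a else 1))
        = if k = i then ∑ a, P a * g a else 1 := by
      intro k
      by_cases h : k = i <;> simp [h, hP.2]
    rw [Finset.prod_congr rfl fun k _ => h3 k,
      Finset.prod_ite_eq' univ i (fun _ => ∑ a, P a * g a)]
    simp
  have h4 : ∑ x : Fin n → γ, iid P n x * g (x i)
      = ∑ x : Fin n → γ, (iid P n x * ∏ k, (if k = i then g (x k) else 1)) :=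
    sum_congr rfl fun x _ => by rw [h1]
  rw [h4, key, h2]

lemma expect_pair [Fintype γ] {P : γ → ℝ} (hP : IsProb P) {n : ℕ} {i j : Fin n}
    (hij : i ≠ j) (g h : γ → ℝ) :
    ∑ x : Fin n → γ, iid P n x * (g (x i) * h (x j))
      = (∑ a, P a * g a) * (∑ a, P a * h a) := by
  classical
  set F : Fin n → γ → ℝ := fun k a => if k = i then g a else if k = j then h a else 1 with hF
  have key : ∑ x : Fin n → γ, (iid P n x * ∏ k, F k (x k)) = ∏ k, ∑ a, P a * F k a :=
    expect_pi P F
  have h1 : ∀ x : Fin n → γ, (∏ k, F k (x k)) = g (x i) * h (x j) := by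
    intro x
    rw [prod_eq_two_of hij (fun k => F k (x k))
      (fun k hki hkj => by simp [hF, hki, hkj])]
    simp [hF, hij, Ne.symm hij]
  have h2 : (∏ k : Fin n, ∑ a, P a * F k a) = (∑ a, P a * g a) * (∑ a, P a * h a) := by
    rw [prod_eq_two_of hij (fun k => ∑ a, P a * F k a)
      (fun k hki hkj => by simp [hF, hki, hkj, hP.2])]
    simp [hF, hij, Ne.symm hij]
  have h4 : ∑ x : Fin n → γ, iid P n x * (g (x i) * h (x j))
      = ∑ x : Fin n → γ, (iid P n x * ∏ k, F k (x k)) :=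
    sum_congr rfl fun x _ => by rw [h1]
  rw [h4, key, h2]

lemma var_iid [Fintype γ] {P : γ → ℝ} (hP : IsProb P) (t : γ → ℝ)
    (ht : ∑ a, P a * t a = 0) (n : ℕ) :
    ∑ x : Fin n → γ, iid P n x * (∑ i, t (x i))^2 = n * ∑ a, P a * (t a)^2 := by
  classical
  have expand : ∀ x : Fin n → γ, iid P n x * (∑ i, t (x i))^2
      = ∑ i, ∑ j, iid P n x * (t (x i) * t (x j)) := by
    intro x
    rw [sq, Finset.sum_mul_sum, Finset.mul_sum]
    exact sum_congr rfl fun i _ => by rw [Finset.mul_sum]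
  rw [sum_congr rfl fun x (_ : x ∈ univ) => expand x]
  rw [Finset.sum_comm]
  have hinner : ∀ i : Fin n, ∑ x : Fin n → γ, ∑ j, iid P n x * (t (x i) * t (x j))
      = ∑ a, P a * (t a)^2 := by
    intro i
    rw [Finset.sum_comm]
    have hterm : ∀ j : Fin n, (∑ x : Fin n → γ, iid P n x * (t (x i) * t (x j)))
        = if i = j then ∑ a, P a * (t a)^2 else 0 := by
      intro j
      by_cases h : i = j
      · subst h
        rw [if_pos rfl]
        have := expect_coord hP i (fun a => (t a)^2)
        rw [← this]
        exact sum_congr rfl fun x _ => by ring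
      · rw [if_neg h, expect_pair hP h t t, ht, zero_mul]
    rw [Finset.sum_congr rfl fun j _ => hterm j, Finset.sum_ite_eq univ i
      (fun _ => ∑ a, P a * (t a)^2)]
    simp
  rw [Finset.sum_congr rfl fun i _ => hinner i, Finset.sum_const, Finset.card_univ,
    Fintype.card_fin, nsmul_eq_mul]

lemma cheb [Fintype γ] {w f : γ → ℝ} (hw : ∀ x, 0 ≤ w x) {c : ℝ} (hc : 0 < c)
    (D : Finset γ) (hD : ∀ x ∈ D, c ≤ (f x)^2) :
    ∑ x ∈ D, w x ≤ (∑ x, w x * (f x)^2) / c := by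
  rw [le_div_iff₀ hc]
  calc (∑ x ∈ D, w x) * c = ∑ x ∈ D, w x * c := by rw [Finset.sum_mul]
    _ ≤ ∑ x ∈ D, w x * (f x)^2 :=
        sum_le_sum fun x hx => mul_le_mul_of_nonneg_left (hD x hx) (hw x)
    _ ≤ ∑ x, w x * (f x)^2 :=
        sum_le_sum_of_subset_of_nonneg (subset_univ D)
          (fun x _ _ => mul_nonneg (hw x) (sq_nonneg _))

lemma sum_Pt [Fintype γ] {P : γ → ℝ} (hP : IsProb P) :
    ∑ a, P a * (-Real.log (P a) - H P) = 0 := by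
  calc ∑ a, P a * (-Real.log (P a) - H P)
      = ∑ a, ((-(P a * Real.log (P a))) - P a * H P) :=
        sum_congr rfl fun a _ => by ring
    _ = (∑ a, -(P a * Real.log (P a))) - ∑ a, P a * H P := Finset.sum_sub_distrib _ _
    _ = H P - (∑ a, P a) * H P := by rw [← Finset.sum_mul]; rfl
    _ = 0 := by rw [hP.2]; ring

lemma iid_pos_log [Fintype γ] {P : γ → ℝ} (hP : IsProb P) {n : ℕ} {x : Fin n → γ}
    (hx : 0 < iid P n x) :
    Real.log (iid P n x) = ∑ i, Real.log (P (x i)) := by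
  apply Real.log_prod
  intro i _
  intro h0
  rw [iid] at hx
  rw [Finset.prod_eq_zero (Finset.mem_univ i) h0] at hx
  exact lt_irrefl 0 hx

lemma aep_core [Fintype γ] {P : γ → ℝ} (hP : IsProb P) {δ : ℝ} (hδ : 0 < δ)
    {n : ℕ} (hn : 0 < n) (D : Finset (Fin n → γ))
    (hD : ∀ x ∈ D, 0 < iid P n x →
      (n * δ)^2 ≤ (∑ i, (-Real.log (P (x i)) - H P))^2) :
    ∑ x ∈ D, iid P n x ≤ V P / (n * δ^2) := by
  classical
  set t : γ → ℝ := fun a => -Real.log (P a) - H P with hts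
  set w := iid P n
  have hw : ∀ x, 0 ≤ w x := (isProb_iid hP n).1
  set D' := D.filter (fun x => 0 < w x) with hD'
  have hsum_eq : ∑ x ∈ D, w x = ∑ x ∈ D', w x := by
    rw [hD']
    refine (Finset.sum_filter_of_ne ?_).symm
    intro x _ hx
    exact lt_of_le_of_ne (hw x) (Ne.symm hx)
  have hc : (0:ℝ) < ((n:ℝ) * δ)^2 := by positivity
  have hcheb := cheb hw hc D' (fun x hx => by
    have hx' := Finset.mem_filter.mp hx
    exact hD x hx'.1 hx'.2)
  have hvar : ∑ x : Fin n → γ, w x * (∑ i, t (x i))^2 = n * V P := by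
    have := var_iid hP t (sum_Pt hP) n
    rw [this]
    congr 1
  rw [hsum_eq]
  calc ∑ x ∈ D', w x ≤ (∑ x, w x * (∑ i, t (x i))^2) / ((n:ℝ) * δ)^2 := hcheb
    _ = (n * V P) / ((n:ℝ)*δ)^2 := by rw [hvar]
    _ = V P / (n * δ^2) := by
        have hn' : (0:ℝ) < n := by exact_mod_cast hn
        field_simp

lemma V_eq [Fintype γ] (P : γ → ℝ) :
    V P = ∑ a, P a * (-Real.log (P a) - H P)^2 := rfl

lemma aep_le [Fintype γ] {P : γ → ℝ} (hP : IsProb P) {δ : ℝ} (hδ : 0 < δ)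
    {n : ℕ} (hn : 0 < n) :
    ∑ x ∈ univ.filter (fun x : Fin n → γ => iid P n x ≤ Real.exp (-((n:ℝ) * (H P + δ)))),
      iid P n x ≤ V P / (n * δ^2) := by
  classical
  apply aep_core hP hδ hn
  intro x hx hpos
  have hle := (Finset.mem_filter.mp hx).2
  have hlog : Real.log (iid P n x) ≤ -((n:ℝ) * (H P + δ)) := by
    calc Real.log (iid P n x) ≤ Real.log (Real.exp (-((n:ℝ) * (H P + δ)))) :=
          Real.log_le_log hpos hle
      _ = -((n:ℝ) * (H P + δ)) := Real.log_exp _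
  have hsum : (∑ i, (-Real.log (P (x i)) - H P)) = -Real.log (iid P n x) - n * H P := by
    rw [iid_pos_log hP hpos, Finset.sum_sub_distrib, Finset.sum_neg_distrib]
    simp [Finset.sum_const, Finset.card_univ, mul_comm]
  rw [hsum]
  have hnd : (0:ℝ) ≤ n * δ := by positivity
  nlinarith [hlog]

lemma aep_ge [Fintype γ] {P : γ → ℝ} (hP : IsProb P) {δ : ℝ} (hδ : 0 < δ)
    {n : ℕ} (hn : 0 < n) :
    ∑ x ∈ univ.filter (fun x : Fin n → γ => Real.exp (-((n:ℝ) * (H P - δ))) ≤ iid P n x),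
      iid P n x ≤ V P / (n * δ^2) := by
  classical
  apply aep_core hP hδ hn
  intro x hx hpos
  have hge := (Finset.mem_filter.mp hx).2
  have hlog : -((n:ℝ) * (H P - δ)) ≤ Real.log (iid P n x) := by
    calc -((n:ℝ) * (H P - δ)) = Real.log (Real.exp (-((n:ℝ) * (H P - δ)))) :=
          (Real.log_exp _).symm
      _ ≤ Real.log (iid P n x) := Real.log_le_log (Real.exp_pos _) hge
  have hsum : (∑ i, (-Real.log (P (x i)) - H P)) = -Real.log (iid P n x) - n * H P := by
    rw [iid_pos_log hP hpos, Finset.sum_sub_distrib, Finset.sum_neg_distrib]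
    simp [Finset.sum_const, Finset.card_univ, mul_comm]
  rw [hsum]
  have hnd : (0:ℝ) ≤ n * δ := by positivity
  nlinarith [hlog]

end Aux3

section Aux4

open Finset

variable {γ δ : Type*}

lemma exists_subset_sum (p : γ → ℝ) {τ : ℝ} (hτ : 0 ≤ τ) :
    ∀ (U : Finset γ), (∀ x ∈ U, 0 ≤ p x ∧ p x ≤ τ) →
    ∀ t : ℝ, 0 ≤ t → t ≤ ∑ x ∈ U, p x →
      ∃ A ⊆ U, t - τ ≤ ∑ x ∈ A, p x ∧ ∑ x ∈ A, p x ≤ t := by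
  classical
  intro U
  induction U using Finset.induction_on with
  | empty =>
    intro _ t ht0 htle
    rw [Finset.sum_empty] at htle
    refine ⟨∅, Finset.Subset.refl _, ?_, ?_⟩
    · rw [Finset.sum_empty]; linarith
    · rw [Finset.sum_empty]; linarith
  | @insert x U hx ih =>
    intro hU t ht0 htle
    by_cases hcase : t ≤ τ
    · refine ⟨∅, Finset.empty_subset _, ?_, ?_⟩
      · rw [Finset.sum_empty]; linarith
      · rw [Finset.sum_empty]; linarith
    · push_neg at hcase
      have hpx := hU x (Finset.mem_insert_self x U)
      rw [Finset.sum_insert hx] at htle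
      obtain ⟨A, hAU, h1, h2⟩ := ih (fun z hz => hU z (Finset.mem_insert_of_mem hz))
        (t - p x) (by linarith [hpx.2]) (by linarith)
      have hxA : x ∉ A := fun h => hx (hAU h)
      refine ⟨insert x A, Finset.insert_subset_insert x hAU, ?_, ?_⟩ <;>
        rw [Finset.sum_insert hxA] <;> linarith

lemma greedy (p : γ → ℝ) {τ : ℝ} (hτ : 0 ≤ τ) (T : Finset δ) :
    ∀ (f : δ → ℝ), (∀ y ∈ T, 0 ≤ f y) →
    ∀ (U : Finset γ), (∀ x ∈ U, 0 ≤ p x ∧ p x ≤ τ) → ∑ y ∈ T, f y ≤ ∑ x ∈ U, p x →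
    ∃ A : δ → Finset γ, (∀ y, A y ⊆ U) ∧
      (∀ y ∈ T, f y - τ ≤ ∑ x ∈ A y, p x ∧ ∑ x ∈ A y, p x ≤ f y) ∧
      (∀ y z, y ≠ z → Disjoint (A y) (A z)) := by
  classical
  induction T using Finset.induction_on with
  | empty =>
    intro f _ U _ _
    exact ⟨fun _ => ∅, fun _ => Finset.empty_subset _, by simp,
      fun _ _ _ => by simp⟩
  | @insert y T hy ih =>
    intro f hf U hU hsum
    have hfy : 0 ≤ f y := hf y (Finset.mem_insert_self _ _)
    have hfyle : f y ≤ ∑ x ∈ U, p x := by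
      have h1 : 0 ≤ ∑ z ∈ T, f z :=
        Finset.sum_nonneg fun z hz => hf z (Finset.mem_insert_of_mem hz)
      rw [Finset.sum_insert hy] at hsum
      linarith
    obtain ⟨Ay, hAyU, hAy1, hAy2⟩ := exists_subset_sum p hτ U hU (f y) hfy hfyle
    have hU' : ∀ x ∈ U \ Ay, 0 ≤ p x ∧ p x ≤ τ := fun x hx => hU x (Finset.mem_sdiff.mp hx).1
    have hsum' : ∑ z ∈ T, f z ≤ ∑ x ∈ U \ Ay, p x := by
      rw [Finset.sum_sdiff_eq_sub hAyU]
      rw [Finset.sum_insert hy] at hsum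
      linarith
    obtain ⟨A', hA'U, hA'bd, hA'dis⟩ :=
      ih f (fun z hz => hf z (Finset.mem_insert_of_mem hz)) (U \ Ay) hU' hsum'
    refine ⟨fun z => if z = y then Ay else A' z, ?_, ?_, ?_⟩
    · intro z
      by_cases h : z = y
      · simp only [h, if_pos rfl]; exact hAyU
      · simp only [if_neg h]
        exact (hA'U z).trans (Finset.sdiff_subset)
    · intro z hz
      by_cases h : z = y
      · subst h
        simp only [if_pos rfl]
        exact ⟨hAy1, hAy2⟩
      · have hzT : z ∈ T := by
          rcases Finset.mem_insert.mp hz with h' | h'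
          · exact absurd h' h
          · exact h'
        simp only [if_neg h]
        exact hA'bd z hzT
    · intro z w hzw
      by_cases hz : z = y <;> by_cases hw : w = y
      · exact absurd (hz.trans hw.symm) hzw
      · simp only [hz, if_pos rfl, if_neg hw]
        exact Finset.disjoint_left.mpr fun u hu hu' =>
          (Finset.mem_sdiff.mp (hA'U w hu')).2 hu
      · simp only [hw, if_pos rfl, if_neg hz]
        exact Finset.disjoint_right.mpr fun u hu hu' =>
          (Finset.mem_sdiff.mp (hA'U z hu')).2 hu
      · simp only [if_neg hz, if_neg hw]
        exact hA'dis z w hzw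

end Aux4

section Main

open Finset

variable {X Y : Type*} [Fintype X] [Fintype Y]

lemma direct_bound {P : X → ℝ} {Q : Y → ℝ} (hP : IsProb P) (hQ : IsProb Q)
    {δ : ℝ} (hδ : 0 < δ) {n L : ℕ} (hn : 0 < n) (hL : 0 < L) :
    1 - V P / (n * δ^2) - V Q / (L * δ^2)
      - Real.exp ((L:ℝ) * (H Q + δ) - (n:ℝ) * (H P - δ))
      ≤ FD (iid P n) (iid Q L) := by
  classical
  set p := iid P n with hp_def
  set q := iid Q L with hq_def
  have hp : IsProb p := isProb_iid hP n
  have hq : IsProb q := isProb_iid hQ L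
  set τP := Real.exp (-((n:ℝ) * (H P - δ))) with hτP
  set τQ := Real.exp (-((L:ℝ) * (H Q + δ))) with hτQ
  set U : Finset (Fin n → X) := univ.filter (fun x => p x ≤ τP) with hUdef
  set T : Finset (Fin L → Y) := univ.filter (fun y => τQ ≤ q y) with hTdef
  -- mass of U
  have hUmass : 1 - V P / (n * δ^2) ≤ ∑ x ∈ U, p x := by
    have hsplit : ∑ x ∈ U, p x + ∑ x ∈ univ.filter (fun x => ¬ p x ≤ τP), p x = 1 := by
      rw [hUdef, Finset.sum_filter_add_sum_filter_not univ _ p, hp.2]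
    have hsub : univ.filter (fun x => ¬ p x ≤ τP) ⊆ univ.filter (fun x => τP ≤ p x) :=
      Finset.monotone_filter_right _ (fun x _ hx => (not_le.mp hx).le)
    have hbd : ∑ x ∈ univ.filter (fun x => ¬ p x ≤ τP), p x ≤ V P / (n * δ^2) := by
      calc ∑ x ∈ univ.filter (fun x => ¬ p x ≤ τP), p x
          ≤ ∑ x ∈ univ.filter (fun x => τP ≤ p x), p x :=
            Finset.sum_le_sum_of_subset_of_nonneg hsub (fun x _ _ => hp.1 x)
        _ ≤ V P / (n * δ^2) := aep_ge hP hδ hn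
    linarith
  -- mass of T
  have hTmass : 1 - V Q / (L * δ^2) ≤ ∑ y ∈ T, q y := by
    have hsplit : ∑ y ∈ T, q y + ∑ y ∈ univ.filter (fun y => ¬ τQ ≤ q y), q y = 1 := by
      rw [hTdef, Finset.sum_filter_add_sum_filter_not univ _ q, hq.2]
    have hsub : univ.filter (fun y => ¬ τQ ≤ q y) ⊆ univ.filter (fun y => q y ≤ τQ) :=
      Finset.monotone_filter_right _ (fun y _ hy => (not_le.mp hy).le)
    have hbd : ∑ y ∈ univ.filter (fun y => ¬ τQ ≤ q y), q y ≤ V Q / (L * δ^2) := by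
      calc ∑ y ∈ univ.filter (fun y => ¬ τQ ≤ q y), q y
          ≤ ∑ y ∈ univ.filter (fun y => q y ≤ τQ), q y :=
            Finset.sum_le_sum_of_subset_of_nonneg hsub (fun y _ _ => hq.1 y)
        _ ≤ V Q / (L * δ^2) := aep_le hQ hδ hL
    linarith
  set c := ∑ x ∈ U, p x with hc
  have hc0 : 0 ≤ c := sum_nonneg fun x _ => hp.1 x
  have hc1 : c ≤ 1 := by
    rw [hc, ← hp.2]
    exact sum_le_sum_of_subset_of_nonneg (Finset.filter_subset _ _) (fun x _ _ => hp.1 x)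
  have hTq1 : ∑ y ∈ T, q y ≤ 1 := by
    rw [← hq.2]
    exact sum_le_sum_of_subset_of_nonneg (Finset.filter_subset _ _) (fun y _ _ => hq.1 y)
  have hTq0 : 0 ≤ ∑ y ∈ T, q y := sum_nonneg fun y _ => hq.1 y
  -- greedy
  have hUatoms : ∀ x ∈ U, 0 ≤ p x ∧ p x ≤ τP :=
    fun x hx => ⟨hp.1 x, (Finset.mem_filter.mp hx).2⟩
  have hsumfT : ∑ y ∈ T, c * q y ≤ ∑ x ∈ U, p x := by
    rw [← Finset.mul_sum]
    calc c * ∑ y ∈ T, q y ≤ c * 1 := mul_le_mul_of_nonneg_left hTq1 hc0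
      _ = ∑ x ∈ U, p x := by rw [mul_one]
  obtain ⟨A, hAU, hAbd, hAdis⟩ := greedy p (Real.exp_pos _).le T (fun y => c * q y)
    (fun y _ => mul_nonneg hc0 (hq.1 y)) U hUatoms hsumfT
  -- the map W
  have hYne : Nonempty Y := prob_nonempty hQ
  have hy0 : Nonempty (Fin L → Y) := ⟨fun _ => Classical.arbitrary Y⟩
  set W : (Fin n → X) → (Fin L → Y) :=
    fun x => if h : ∃ y, x ∈ A y then h.choose else Classical.arbitrary _ with hWdef
  have hW : ∀ y, ∀ x ∈ A y, W x = y := by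
    intro y x hx
    have h : ∃ y', x ∈ A y' := ⟨y, hx⟩
    rw [hWdef]
    simp only [dif_pos h]
    by_contra hne
    exact (Finset.disjoint_left.mp (hAdis _ _ hne) h.choose_spec) hx
  -- fidelity bound
  have hfid : ∑ y ∈ T, (c * q y - τP) ≤ fid (push W p) q := by
    calc ∑ y ∈ T, (c * q y - τP)
        ≤ ∑ y ∈ T, Real.sqrt (push W p y * q y) := by
          apply sum_le_sum
          intro y hy
          have hb := hAbd y hy
          have hm0 : 0 ≤ ∑ x ∈ A y, p x := sum_nonneg fun x hx => (hUatoms x (hAU y hx)).1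
          have hqy : c * q y ≤ q y := by
            nlinarith [hq.1 y]
          have h1 : c * q y - τP ≤ ∑ x ∈ A y, p x := hb.1
          have h2 : ∑ x ∈ A y, p x ≤ q y := hb.2.trans hqy
          have h3 : ∑ x ∈ A y, p x ≤ push W p y := sum_le_push hp.1 (hW y)
          calc c * q y - τP ≤ ∑ x ∈ A y, p x := h1
            _ ≤ Real.sqrt (push W p y * q y) := le_sqrt_mul hm0 h3 h2
      _ ≤ fid (push W p) q := by
          apply sum_le_sum_of_subset_of_nonneg (subset_univ T)
          intro y _ _
          exact Real.sqrt_nonneg _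
  -- card of T bound
  have hTcard : (T.card : ℝ) * τP ≤ Real.exp ((L:ℝ) * (H Q + δ) - (n:ℝ) * (H P - δ)) := by
    have h1 : (T.card : ℝ) * τQ ≤ 1 := by
      calc (T.card : ℝ) * τQ = ∑ _y ∈ T, τQ := by
            rw [Finset.sum_const, nsmul_eq_mul]
        _ ≤ ∑ y ∈ T, q y := sum_le_sum fun y hy => (Finset.mem_filter.mp hy).2
        _ ≤ 1 := hTq1
    have h2 : τP = τQ * Real.exp ((L:ℝ) * (H Q + δ) - (n:ℝ) * (H P - δ)) := by
      rw [hτP, hτQ, ← Real.exp_add]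
      congr 1
      ring
    calc (T.card : ℝ) * τP
        = ((T.card : ℝ) * τQ) * Real.exp ((L:ℝ) * (H Q + δ) - (n:ℝ) * (H P - δ)) := by
          rw [h2]; ring
      _ ≤ 1 * Real.exp ((L:ℝ) * (H Q + δ) - (n:ℝ) * (H P - δ)) :=
          mul_le_mul_of_nonneg_right h1 (Real.exp_pos _).le
      _ = _ := one_mul _
  have hTsum_eq : ∑ y ∈ T, (c * q y - τP) = c * (∑ y ∈ T, q y) - T.card * τP := by
    rw [Finset.sum_sub_distrib, ← Finset.mul_sum, Finset.sum_const, nsmul_eq_mul]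
  have hfinal : 1 - V P / (n * δ^2) - V Q / (L * δ^2)
      - Real.exp ((L:ℝ) * (H Q + δ) - (n:ℝ) * (H P - δ)) ≤ fid (push W p) q := by
    have h5 : c * (∑ y ∈ T, q y) ≥ 1 - V P / (n * δ^2) - V Q / (L * δ^2) := by
      nlinarith
    rw [hTsum_eq] at hfid
    linarith
  exact hfinal.trans (le_FD p q W)

lemma converse_bound {P : X → ℝ} {Q : Y → ℝ} (hP : IsProb P) (hQ : IsProb Q)
    {δ δ' : ℝ} (hδ : 0 < δ) (hδ' : 0 < δ') {n L : ℕ} (hn : 0 < n) (hL : 0 < L) :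
    FM (iid P n) (iid Q L) ≤
      Real.sqrt (V Q / (L * δ'^2)
        + Real.exp ((n:ℝ) * (H P + δ) - (L:ℝ) * (H Q - δ'))) +
      Real.sqrt (V P / (n * δ^2)) := by
  classical
  set p := iid P n with hp_def
  set q := iid Q L with hq_def
  have hp : IsProb p := isProb_iid hP n
  have hq : IsProb q := isProb_iid hQ L
  have hYne : Nonempty Y := prob_nonempty hQ
  have hy0 : Nonempty (Fin L → Y) := ⟨fun _ => Classical.arbitrary Y⟩
  set τ := Real.exp (-((n:ℝ) * (H P + δ))) with hτdef
  set τ' := Real.exp (-((L:ℝ) * (H Q - δ'))) with hτ'def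
  set BigP : Finset (Fin n → X) := univ.filter (fun x => τ ≤ p x) with hBigP
  set BigQ : Finset (Fin L → Y) := univ.filter (fun y => τ' ≤ q y) with hBigQ
  set K := BigP.card with hK
  -- mass of BigP
  have hPmass : 1 - V P / (n * δ^2) ≤ ∑ x ∈ BigP, p x := by
    have hsplit : ∑ x ∈ BigP, p x + ∑ x ∈ univ.filter (fun x => ¬ τ ≤ p x), p x = 1 := by
      rw [hBigP, Finset.sum_filter_add_sum_filter_not univ _ p, hp.2]
    have hsub : univ.filter (fun x => ¬ τ ≤ p x) ⊆ univ.filter (fun x => p x ≤ τ) :=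
      Finset.monotone_filter_right _ (fun x _ hx => (not_le.mp hx).le)
    have hbd : ∑ x ∈ univ.filter (fun x => ¬ τ ≤ p x), p x ≤ V P / (n * δ^2) := by
      calc ∑ x ∈ univ.filter (fun x => ¬ τ ≤ p x), p x
          ≤ ∑ x ∈ univ.filter (fun x => p x ≤ τ), p x :=
            Finset.sum_le_sum_of_subset_of_nonneg hsub (fun x _ _ => hp.1 x)
        _ ≤ V P / (n * δ^2) := aep_le hP hδ hn
    linarith
  -- K bound
  have hKbound : (K : ℝ) * τ ≤ 1 := by
    calc (K : ℝ) * τ = ∑ _x ∈ BigP, τ := by rw [Finset.sum_const, nsmul_eq_mul]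
      _ ≤ ∑ x ∈ BigP, p x := sum_le_sum fun x hx => (Finset.mem_filter.mp hx).2
      _ ≤ 1 := by
          rw [← hp.2]
          exact sum_le_sum_of_subset_of_nonneg (Finset.filter_subset _ _)
            (fun x _ _ => hp.1 x)
  have hKexp : (K : ℝ) ≤ Real.exp ((n:ℝ) * (H P + δ)) := by
    have h0 : (K:ℝ) = ((K:ℝ) * τ) * Real.exp ((n:ℝ) * (H P + δ)) := by
      rw [mul_assoc, hτdef, ← Real.exp_add, neg_add_cancel, Real.exp_zero, mul_one]
    rw [h0]
    calc ((K:ℝ) * τ) * Real.exp ((n:ℝ) * (H P + δ))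
        ≤ 1 * Real.exp ((n:ℝ) * (H P + δ)) :=
          mul_le_mul_of_nonneg_right hKbound (Real.exp_pos _).le
      _ = _ := one_mul _
  -- BigQ mass
  have hQmass : ∑ y ∈ BigQ, q y ≤ V Q / (L * δ'^2) := by
    rw [hBigQ, hτ'def]
    exact aep_ge hQ hδ' hL
  -- topSum bound
  have htopP : 1 - V P / (n * δ^2) ≤ topSum p K :=
    hPmass.trans (le_topSum p (le_refl K))
  -- now bound every element of the FM set
  have hbound : ∀ r ∈ {r : ℝ | ∃ P' : (Fin L → Y) → ℝ, IsProb P' ∧ Maj p P' ∧ r = fid P' q},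
      r ≤ Real.sqrt (V Q / (L * δ'^2)
        + Real.exp ((n:ℝ) * (H P + δ) - (L:ℝ) * (H Q - δ'))) +
      Real.sqrt (V P / (n * δ^2)) := by
    rintro r ⟨P', hP', hMaj, rfl⟩
    obtain ⟨A, hAcard, hAval⟩ := topSum_spec P' K
    have hA1 : ∑ x ∈ A, P' x ≤ 1 := by
      rw [← hP'.2]
      exact sum_le_sum_of_subset_of_nonneg (subset_univ A) (fun x _ _ => hP'.1 x)
    have htopA : 1 - V P / (n * δ^2) ≤ ∑ y ∈ A, P' y := by
      rw [← hAval]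
      exact htopP.trans (hMaj K)
    -- split fid
    have hsplit : fid P' q = ∑ y ∈ A, Real.sqrt (P' y * q y)
        + ∑ y ∈ univ \ A, Real.sqrt (P' y * q y) := by
      rw [fid, ← Finset.sum_sdiff (subset_univ A)]
      ring
    -- first part
    have hAq : ∑ y ∈ A, q y ≤ V Q / (L * δ'^2)
        + Real.exp ((n:ℝ) * (H P + δ) - (L:ℝ) * (H Q - δ')) := by
      have h1 : ∑ y ∈ A, q y = ∑ y ∈ A.filter (fun y => τ' ≤ q y), q y
          + ∑ y ∈ A.filter (fun y => ¬ τ' ≤ q y), q y :=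
        (Finset.sum_filter_add_sum_filter_not A _ q).symm
      have h2 : ∑ y ∈ A.filter (fun y => τ' ≤ q y), q y ≤ ∑ y ∈ BigQ, q y := by
        apply sum_le_sum_of_subset_of_nonneg _ (fun y _ _ => hq.1 y)
        intro y hy
        rw [Finset.mem_filter] at hy ⊢
        exact ⟨mem_univ y, hy.2⟩
      have h3 : ∑ y ∈ A.filter (fun y => ¬ τ' ≤ q y), q y ≤ (K:ℝ) * τ' := by
        calc ∑ y ∈ A.filter (fun y => ¬ τ' ≤ q y), q y
            ≤ ∑ _y ∈ A.filter (fun y => ¬ τ' ≤ q y), τ' :=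
              sum_le_sum fun y hy => (not_le.mp (Finset.mem_filter.mp hy).2).le
          _ = (A.filter (fun y => ¬ τ' ≤ q y)).card * τ' := by
              rw [Finset.sum_const, nsmul_eq_mul]
          _ ≤ (K:ℝ) * τ' := by
              apply mul_le_mul_of_nonneg_right _ (Real.exp_pos _).le
              exact_mod_cast le_trans (Finset.card_le_card (Finset.filter_subset _ _)) hAcard
      have h4 : (K:ℝ) * τ' ≤ Real.exp ((n:ℝ) * (H P + δ) - (L:ℝ) * (H Q - δ')) := by
        calc (K:ℝ) * τ' ≤ Real.exp ((n:ℝ) * (H P + δ)) * τ' :=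
              mul_le_mul_of_nonneg_right hKexp (Real.exp_pos _).le
          _ = Real.exp ((n:ℝ) * (H P + δ) - (L:ℝ) * (H Q - δ')) := by
              rw [hτ'def, ← Real.exp_add, ← sub_eq_add_neg]
      linarith
    have hpart1 : ∑ y ∈ A, Real.sqrt (P' y * q y)
        ≤ Real.sqrt (V Q / (L * δ'^2)
          + Real.exp ((n:ℝ) * (H P + δ) - (L:ℝ) * (H Q - δ'))) := by
      calc ∑ y ∈ A, Real.sqrt (P' y * q y)
          ≤ Real.sqrt ((∑ y ∈ A, P' y) * (∑ y ∈ A, q y)) :=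
            sum_sqrt_mul_le hP'.1 hq.1
        _ ≤ Real.sqrt (∑ y ∈ A, q y) := by
            apply Real.sqrt_le_sqrt
            nlinarith [sum_nonneg (fun y (_ : y ∈ A) => hq.1 y),
              sum_nonneg (fun y (_ : y ∈ A) => hP'.1 y)]
        _ ≤ _ := Real.sqrt_le_sqrt hAq
    -- second part
    have hpart2 : ∑ y ∈ univ \ A, Real.sqrt (P' y * q y)
        ≤ Real.sqrt (V P / (n * δ^2)) := by
      have h5 : ∑ y ∈ univ \ A, P' y = 1 - ∑ y ∈ A, P' y := by
        rw [Finset.sum_sdiff_eq_sub (subset_univ A), hP'.2]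
      have h6 : ∑ y ∈ univ \ A, q y ≤ 1 := by
        rw [← hq.2]
        exact sum_le_sum_of_subset_of_nonneg (Finset.sdiff_subset) (fun y _ _ => hq.1 y)
      calc ∑ y ∈ univ \ A, Real.sqrt (P' y * q y)
          ≤ Real.sqrt ((∑ y ∈ univ \ A, P' y) * (∑ y ∈ univ \ A, q y)) :=
            sum_sqrt_mul_le hP'.1 hq.1
        _ ≤ Real.sqrt (V P / (n * δ^2)) := by
            apply Real.sqrt_le_sqrt
            have h7 : 0 ≤ ∑ y ∈ univ \ A, P' y :=
              sum_nonneg fun y _ => hP'.1 y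
            have h8 : 0 ≤ ∑ y ∈ univ \ A, q y :=
              sum_nonneg fun y _ => hq.1 y
            have h9 : ∑ y ∈ univ \ A, P' y ≤ V P / (n * δ^2) := by
              rw [h5]; linarith
            nlinarith
    rw [hsplit]
    exact add_le_add hpart1 hpart2
  apply csSup_le (FMset_nonempty hp q)
  exact hbound

end Main

/-- first order asymptotics of random number generation. -/
theorem first_order {X Y : Type*} [Fintype X] [Fintype Y]
    (P : X → ℝ) (Q : Y → ℝ) (hP : IsProb P) (hQ : IsProb Q)
    (hHQ : 0 < H Q) (a : ℝ) (ha : 0 < a) :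
    (a < H P / H Q →
      Tendsto (fun n : ℕ => FD (iid P n) (iid Q ⌊a * n⌋₊)) atTop (nhds 1) ∧
      Tendsto (fun n : ℕ => FM (iid P n) (iid Q ⌊a * n⌋₊)) atTop (nhds 1)) ∧
    (a > H P / H Q →
      Tendsto (fun n : ℕ => FD (iid P n) (iid Q ⌊a * n⌋₊)) atTop (nhds 0) ∧
      Tendsto (fun n : ℕ => FM (iid P n) (iid Q ⌊a * n⌋₊)) atTop (nhds 0)) := by
  classical
  haveI hYne : Nonempty Y := prob_nonempty hQ
  have hcast : Tendsto (fun n : ℕ => (n:ℝ)) atTop atTop := tendsto_natCast_atTop_atTop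
  have hfloor_top : Tendsto (fun n : ℕ => ⌊a * (n:ℝ)⌋₊) atTop atTop :=
    tendsto_nat_floor_atTop.comp (hcast.const_mul_atTop ha)
  have hfloor_cast : Tendsto (fun n : ℕ => ((⌊a * (n:ℝ)⌋₊ : ℕ) : ℝ)) atTop atTop :=
    hcast.comp hfloor_top
  have hNpos : ∀ᶠ n : ℕ in atTop, 0 < n ∧ 0 < ⌊a * (n:ℝ)⌋₊ := by
    filter_upwards [eventually_gt_atTop 0, hfloor_top.eventually_gt_atTop 0] with n h1 h2
    exact ⟨h1, h2⟩
  constructor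
  · -- direct part
    intro hlt
    have haH : a * H Q < H P := (lt_div_iff₀ hHQ).mp hlt
    set D := H P - a * H Q with hD
    have hDpos : 0 < D := by rw [hD]; linarith
    set δ := D / (2 * (1 + a)) with hδdef
    have hδ : 0 < δ := by
      apply div_pos hDpos
      linarith
    have hδa : δ * (2 * (1 + a)) = D := by
      rw [hδdef]
      field_simp
    have hρ : 0 < H P - δ - a * (H Q + δ) := by nlinarith
    set ρ := H P - δ - a * (H Q + δ) with hρdef
    set g : ℕ → ℝ := fun n => 1 - V P / (n * δ^2) - V Q / ((⌊a * (n:ℝ)⌋₊ : ℝ) * δ^2)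
      - Real.exp ((⌊a * (n:ℝ)⌋₊ : ℝ) * (H Q + δ) - (n:ℝ) * (H P - δ)) with hgdef
    -- limit of g
    have hδ2 : (0:ℝ) < δ^2 := by positivity
    have hc1 : Tendsto (fun n : ℕ => V P / ((n:ℝ) * δ^2)) atTop (nhds 0) := by
      have h2 : Tendsto (fun n : ℕ => (n:ℝ) * δ^2) atTop atTop :=
        Tendsto.atTop_mul_const hδ2 hcast
      exact Tendsto.const_div_atTop h2 (V P)
    have hc2 : Tendsto (fun n : ℕ => V Q / ((⌊a * (n:ℝ)⌋₊ : ℝ) * δ^2)) atTop (nhds 0) := by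
      have h2 : Tendsto (fun n : ℕ => (⌊a * (n:ℝ)⌋₊ : ℝ) * δ^2) atTop atTop :=
        Tendsto.atTop_mul_const hδ2 hfloor_cast
      exact Tendsto.const_div_atTop h2 (V Q)
    have hc3 : Tendsto (fun n : ℕ =>
        Real.exp ((⌊a * (n:ℝ)⌋₊ : ℝ) * (H Q + δ) - (n:ℝ) * (H P - δ))) atTop (nhds 0) := by
      apply squeeze_zero (fun n => (Real.exp_pos _).le)
        (g := fun n : ℕ => Real.exp (-(ρ * (n:ℝ))))
      · intro n
        apply Real.exp_le_exp.mpr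
        have hfl : (⌊a * (n:ℝ)⌋₊ : ℝ) ≤ a * n := Nat.floor_le (by positivity)
        have hmul : (⌊a * (n:ℝ)⌋₊ : ℝ) * (H Q + δ) ≤ a * n * (H Q + δ) :=
          mul_le_mul_of_nonneg_right hfl (by positivity)
        rw [hρdef]
        nlinarith
      · exact Real.tendsto_exp_atBot.comp
          (tendsto_neg_atTop_atBot.comp (hcast.const_mul_atTop hρ))
    have hg1 : Tendsto g atTop (nhds 1) := by
      have := ((tendsto_const_nhds (x := (1:ℝ)) (f := atTop)).sub hc1).sub hc2 |>.sub hc3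
      simpa using this
    have hFDbd : ∀ᶠ n : ℕ in atTop, g n ≤ FD (iid P n) (iid Q ⌊a * (n:ℝ)⌋₊) := by
      filter_upwards [hNpos] with n hn
      exact direct_bound hP hQ hδ hn.1 hn.2
    have hFDub : ∀ᶠ n : ℕ in atTop, FD (iid P n) (iid Q ⌊a * (n:ℝ)⌋₊) ≤ 1 :=
      Filter.Eventually.of_forall fun n =>
        FD_le_one (isProb_iid hP n) (isProb_iid hQ _)
    have hFD : Tendsto (fun n : ℕ => FD (iid P n) (iid Q ⌊a * (n:ℝ)⌋₊)) atTop (nhds 1) :=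
      tendsto_of_tendsto_of_tendsto_of_le_of_le' hg1 tendsto_const_nhds hFDbd hFDub
    refine ⟨hFD, ?_⟩
    have hFMlb : ∀ᶠ n : ℕ in atTop,
        FD (iid P n) (iid Q ⌊a * (n:ℝ)⌋₊) ≤ FM (iid P n) (iid Q ⌊a * (n:ℝ)⌋₊) :=
      Filter.Eventually.of_forall fun n =>
        FD_le_FM (isProb_iid hP n) (isProb_iid hQ _)
    have hFMub : ∀ᶠ n : ℕ in atTop, FM (iid P n) (iid Q ⌊a * (n:ℝ)⌋₊) ≤ 1 :=
      Filter.Eventually.of_forall fun n =>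
        FM_le_one (isProb_iid hP n) (isProb_iid hQ _)
    exact tendsto_of_tendsto_of_tendsto_of_le_of_le' hFD tendsto_const_nhds hFMlb hFMub
  · -- converse part
    intro hgt
    have haH : H P < a * H Q := (div_lt_iff₀ hHQ).mp hgt
    have hHP0 : 0 ≤ H P := H_nonneg hP
    set D := a * H Q - H P with hD
    have hDpos : 0 < D := by rw [hD]; linarith
    set δ := D / 4 with hδdef
    set δ' := D / (4 * a) with hδ'def
    have hδ : 0 < δ := by positivity
    have hδ' : 0 < δ' := by positivity
    have haδ' : a * δ' = D / 4 := by
      rw [hδ'def]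
      field_simp
    have hρ' : 0 < a * (H Q - δ') - (H P + δ) := by nlinarith
    set ρ' := a * (H Q - δ') - (H P + δ) with hρ'def
    have hq' : 0 < H Q - δ' := by nlinarith
    set B : ℕ → ℝ := fun n =>
      Real.sqrt (V Q / ((⌊a * (n:ℝ)⌋₊ : ℝ) * δ'^2)
        + Real.exp ((n:ℝ) * (H P + δ) - (⌊a * (n:ℝ)⌋₊ : ℝ) * (H Q - δ'))) +
      Real.sqrt (V P / ((n:ℝ) * δ^2)) with hBdef
    have hδ2 : (0:ℝ) < δ^2 := by positivity
    have hδ'2 : (0:ℝ) < δ'^2 := by positivity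
    have hc1 : Tendsto (fun n : ℕ => V P / ((n:ℝ) * δ^2)) atTop (nhds 0) := by
      have h2 : Tendsto (fun n : ℕ => (n:ℝ) * δ^2) atTop atTop :=
        Tendsto.atTop_mul_const hδ2 hcast
      exact Tendsto.const_div_atTop h2 (V P)
    have hc2 : Tendsto (fun n : ℕ => V Q / ((⌊a * (n:ℝ)⌋₊ : ℝ) * δ'^2)) atTop (nhds 0) := by
      have h2 : Tendsto (fun n : ℕ => (⌊a * (n:ℝ)⌋₊ : ℝ) * δ'^2) atTop atTop :=
        Tendsto.atTop_mul_const hδ'2 hfloor_cast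
      exact Tendsto.const_div_atTop h2 (V Q)
    have hc3 : Tendsto (fun n : ℕ =>
        Real.exp ((n:ℝ) * (H P + δ) - (⌊a * (n:ℝ)⌋₊ : ℝ) * (H Q - δ'))) atTop (nhds 0) := by
      apply squeeze_zero (fun n => (Real.exp_pos _).le)
        (g := fun n : ℕ => Real.exp (-(ρ' * (n:ℝ)) + (H Q - δ')))
      · intro n
        apply Real.exp_le_exp.mpr
        have hfl : a * (n:ℝ) - 1 ≤ (⌊a * (n:ℝ)⌋₊ : ℝ) := by
          have := Nat.lt_floor_add_one (a * (n:ℝ))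
          linarith
        have hmul : (a * (n:ℝ) - 1) * (H Q - δ') ≤ (⌊a * (n:ℝ)⌋₊ : ℝ) * (H Q - δ') :=
          mul_le_mul_of_nonneg_right hfl hq'.le
        rw [hρ'def]
        nlinarith
      · apply Real.tendsto_exp_atBot.comp
        apply tendsto_atBot_add_const_right
        exact tendsto_neg_atTop_atBot.comp (hcast.const_mul_atTop hρ')
    have hB0 : Tendsto B atTop (nhds 0) := by
      have := ((hc2.add hc3).sqrt).add (hc1.sqrt)
      simpa using this
    have hFMub : ∀ᶠ n : ℕ in atTop, FM (iid P n) (iid Q ⌊a * (n:ℝ)⌋₊) ≤ B n := by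
      filter_upwards [hNpos] with n hn
      exact converse_bound hP hQ hδ hδ' hn.1 hn.2
    have hFMlb : ∀ᶠ n : ℕ in atTop, (0:ℝ) ≤ FM (iid P n) (iid Q ⌊a * (n:ℝ)⌋₊) :=
      Filter.Eventually.of_forall fun n =>
        FM_nonneg (isProb_iid hP n) (isProb_iid hQ _)
    have hFM : Tendsto (fun n : ℕ => FM (iid P n) (iid Q ⌊a * (n:ℝ)⌋₊)) atTop (nhds 0) :=
      tendsto_of_tendsto_of_tendsto_of_le_of_le' tendsto_const_nhds hB0 hFMlb hFMub
    refine ⟨?_, hFM⟩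
    have hFDlb : ∀ᶠ n : ℕ in atTop, (0:ℝ) ≤ FD (iid P n) (iid Q ⌊a * (n:ℝ)⌋₊) :=
      Filter.Eventually.of_forall fun n => FD_nonneg _ _
    have hFDub : ∀ᶠ n : ℕ in atTop,
        FD (iid P n) (iid Q ⌊a * (n:ℝ)⌋₊) ≤ FM (iid P n) (iid Q ⌊a * (n:ℝ)⌋₊) :=
      Filter.Eventually.of_forall fun n =>
        FD_le_FM (isProb_iid hP n) (isProb_iid hQ _)
    exact tendsto_of_tendsto_of_tendsto_of_le_of_le' tendsto_const_nhds hFM hFDlb hFDub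


end RNG
end

section
/- Let P and Q be probability distributions on finite sets, neither of which is a uniform distribution (so V(P) > 0 and V(Q) > 0), and suppose H(P)/V(P) > H(Q)/V(Q). Then for every b ∈ ℝ the equation N_P(x)/N_{P,Q,b}(x) = G_P(x)/G_{P,Q,b}(x) has a unique real solution x = α. -/
open MeasureTheory Filter

namespace RNG

variable {α β : Type*}

section AuxUnique
open Set

lemma normalPDF_pos (m v t : ℝ) (hv : 0 < v) : 0 < normalPDF m v t :=
  mul_pos (inv_pos.2 (Real.sqrt_pos.2 (by positivity))) (Real.exp_pos _)

lemma normalPDF_scale (m v x : ℝ) (hv : 0 < v) :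
    normalPDF m v x = normalPDF 0 1 ((x - m) / Real.sqrt v) / Real.sqrt v := by
  have hs : (0:ℝ) < Real.sqrt v := Real.sqrt_pos.2 hv
  unfold normalPDF
  rw [Real.sqrt_mul (by positivity) v]
  have h1 : (((x - m) / Real.sqrt v - 0) : ℝ) ^ 2 = (x - m)^2 / v := by
    rw [sub_zero, div_pow, Real.sq_sqrt hv.le]
  rw [h1, mul_inv]
  rw [div_eq_mul_inv]
  ring_nf

lemma continuous_normalPDF (m v : ℝ) : Continuous (normalPDF m v) := by
  unfold normalPDF; fun_prop

lemma integrable_std : Integrable (normalPDF 0 1) := by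
  have h := (integrable_exp_neg_mul_sq (by norm_num : (0:ℝ) < 1/2)).const_mul
    (Real.sqrt (2 * Real.pi * 1))⁻¹
  refine h.congr (Eventually.of_forall fun t => ?_)
  unfold normalPDF; ring_nf

lemma integral_std : ∫ t, normalPDF 0 1 t = 1 := by
  unfold normalPDF
  rw [MeasureTheory.integral_const_mul]
  have : ∀ t : ℝ, Real.exp (-(t - 0) ^ 2 / (2 * 1)) = Real.exp (-(1/2) * t ^ 2) := by
    intro t; ring_nf
  rw [MeasureTheory.integral_congr_ae (Eventually.of_forall this)]
  rw [integral_gaussian]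
  rw [mul_one]
  rw [inv_mul_eq_div, div_eq_one_iff_eq (by positivity)]
  congr 1
  rw [div_div_eq_mul_div, mul_comm]
  ring_nf

lemma stdG_pos (x : ℝ) : 0 < stdG x := by
  rw [stdG]
  rw [MeasureTheory.setIntegral_pos_iff_support_of_nonneg_ae
    (Eventually.of_forall fun t => (normalPDF_pos 0 1 t one_pos).le)
    integrable_std.integrableOn]
  have : Function.support (normalPDF 0 1) = Set.univ := by
    ext t; simp [Function.mem_support, (normalPDF_pos 0 1 t one_pos).ne']
  rw [this, Set.univ_inter]
  simp [Real.volume_Iic]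

lemma stdG_le_one (x : ℝ) : stdG x ≤ 1 := by
  rw [stdG]
  exact le_trans (MeasureTheory.setIntegral_le_integral integrable_std
    (Eventually.of_forall fun t => (normalPDF_pos 0 1 t one_pos).le)) integral_std.le

lemma stdG_mono : Monotone stdG := by
  intro a b hab
  exact MeasureTheory.setIntegral_mono_set integrable_std.integrableOn
    (Eventually.of_forall fun t => (normalPDF_pos 0 1 t one_pos).le)
    (HasSubset.Subset.eventuallyLE (Set.Iic_subset_Iic.2 hab))

lemma sqrt_two_pi_ge_one : 1 ≤ Real.sqrt (2 * Real.pi) := by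
  rw [show (1:ℝ) = Real.sqrt 1 by simp]
  exact Real.sqrt_le_sqrt (by nlinarith [Real.pi_gt_three])

lemma normalPDF_le_exp {t : ℝ} (ht : t ≤ -2) : normalPDF 0 1 t ≤ Real.exp t := by
  unfold normalPDF
  have h1 : (Real.sqrt (2 * Real.pi * 1))⁻¹ ≤ 1 := by
    rw [mul_one]
    exact inv_le_one_of_one_le₀ sqrt_two_pi_ge_one
  have h2 : Real.exp (-(t - 0) ^ 2 / (2 * 1)) ≤ Real.exp t := by
    apply Real.exp_le_exp.2; nlinarith
  calc (Real.sqrt (2 * Real.pi * 1))⁻¹ * Real.exp (-(t - 0) ^ 2 / (2 * 1))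
      ≤ 1 * Real.exp t := by
        apply mul_le_mul h1 h2 (Real.exp_pos _).le zero_le_one
    _ = Real.exp t := one_mul _

lemma stdG_le_exp {x : ℝ} (hx : x ≤ -2) : stdG x ≤ Real.exp x := by
  rw [stdG, ← integral_exp_Iic x]
  apply MeasureTheory.setIntegral_mono_on integrable_std.integrableOn
    (integrableOn_exp_Iic x) measurableSet_Iic
  intro t ht
  exact normalPDF_le_exp (ht.trans hx)

lemma tendsto_stdG_atBot : Tendsto stdG atBot (nhds 0) := by
  apply squeeze_zero' (Eventually.of_forall fun x => (stdG_pos x).le)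
    (eventually_atBot.2 ⟨-2, fun x hx => stdG_le_exp hx⟩) Real.tendsto_exp_atBot

lemma tendsto_normalPDF_atBot : Tendsto (normalPDF 0 1) atBot (nhds 0) := by
  apply squeeze_zero' (Eventually.of_forall fun x => (normalPDF_pos 0 1 x one_pos).le)
    (eventually_atBot.2 ⟨-2, fun x hx => normalPDF_le_exp hx⟩) Real.tendsto_exp_atBot

lemma hasDerivAt_stdG (x : ℝ) : HasDerivAt stdG (normalPDF 0 1 x) x := by
  have key : ∀ y, stdG y = stdG 0 + ∫ t in (0:ℝ)..y, normalPDF 0 1 t := by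
    intro y
    rw [← intervalIntegral.integral_Iic_sub_Iic integrable_std.integrableOn
      integrable_std.integrableOn]
    unfold stdG; ring
  have h2 : HasDerivAt (fun y => stdG 0 + ∫ t in (0:ℝ)..y, normalPDF 0 1 t)
      (normalPDF 0 1 x) x := by
    apply HasDerivAt.const_add
    exact intervalIntegral.integral_hasDerivAt_right
      (integrable_std.intervalIntegrable)
      ((continuous_normalPDF 0 1).aestronglyMeasurable.stronglyMeasurableAtFilter)
      (continuous_normalPDF 0 1).continuousAt
  exact h2.congr_of_eventuallyEq (Eventually.of_forall key)

lemma hasDerivAt_normalPDF (m v x : ℝ) (hv : 0 < v) :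
    HasDerivAt (normalPDF m v) (-((x - m) / v) * normalPDF m v x) x := by
  unfold normalPDF
  have h1 : HasDerivAt (fun t : ℝ => -(t - m) ^ 2 / (2 * v))
      (-(2 * (x - m)) / (2 * v)) x := by
    have : HasDerivAt (fun t : ℝ => -(t - m) ^ 2) (-(2 * (x - m))) x := by
      have h := ((hasDerivAt_id x).sub_const m).fun_pow 2
      simpa using h.fun_neg
    exact this.div_const (2 * v)
  have h2 := (h1.exp).const_mul (Real.sqrt (2 * Real.pi * v))⁻¹
  refine h2.congr_deriv (Eq.symm ?_)
  field_simp

lemma pos_of_strictMono_tendsto {f : ℝ → ℝ} (hm : StrictMono f)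
    (h0 : Tendsto f atBot (nhds 0)) (x : ℝ) : 0 < f x := by
  have h1 : (0:ℝ) ≤ f (x - 1) := by
    apply le_of_tendsto h0
    filter_upwards [eventually_le_atBot (x - 1)] with c hc
    exact hm.monotone hc
  exact lt_of_le_of_lt h1 (hm (sub_one_lt x))

lemma millsA_pos (z : ℝ) : 0 < normalPDF 0 1 z + z * stdG z := by
  set A : ℝ → ℝ := fun z => normalPDF 0 1 z + z * stdG z with hA
  have hder : ∀ y, HasDerivAt A (stdG y) y := by
    intro y
    have h1 := (hasDerivAt_normalPDF 0 1 y one_pos).add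
      ((hasDerivAt_id y).mul (hasDerivAt_stdG y))
    refine h1.congr_deriv (Eq.symm ?_)
    simp
  have hmono : StrictMono A := by
    apply strictMono_of_deriv_pos
    intro y; rw [(hder y).deriv]; exact stdG_pos y
  have htends : Tendsto A atBot (nhds 0) := by
    have h1 : Tendsto (fun z : ℝ => z * stdG z) atBot (nhds 0) := by
      have hup : Tendsto (fun y : ℝ => y ^ 1 * Real.exp (-y)) atTop (nhds 0) :=
        Real.tendsto_pow_mul_exp_neg_atTop_nhds_zero 1
      have hneg : Tendsto (fun z : ℝ => -z) atBot atTop := tendsto_neg_atBot_atTop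
      have hcomp : Tendsto (fun z : ℝ => -z * Real.exp z) atBot (nhds 0) := by
        refine (hup.comp hneg).congr fun z => ?_
        simp [Function.comp]
      apply squeeze_zero_norm' ?_ hcomp
      filter_upwards [eventually_le_atBot (-2:ℝ)] with z hz
      have hz0 : z < 0 := by linarith
      rw [Real.norm_eq_abs, abs_mul, abs_of_neg hz0, abs_of_pos (stdG_pos z)]
      exact mul_le_mul le_rfl (stdG_le_exp hz) (stdG_pos z).le (by linarith)
    have := tendsto_normalPDF_atBot.add h1
    simpa using this
  exact pos_of_strictMono_tendsto hmono htends z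

lemma tendsto_sq_stdG_atBot : Tendsto (fun z : ℝ => (1 + z^2) * stdG z) atBot (nhds 0) := by
  have hup : Tendsto (fun y : ℝ => (1 + y^2) * Real.exp (-y)) atTop (nhds 0) := by
    have h0 : Tendsto (fun y : ℝ => y ^ 0 * Real.exp (-y)) atTop (nhds 0) :=
      Real.tendsto_pow_mul_exp_neg_atTop_nhds_zero 0
    have h2 : Tendsto (fun y : ℝ => y ^ 2 * Real.exp (-y)) atTop (nhds 0) :=
      Real.tendsto_pow_mul_exp_neg_atTop_nhds_zero 2
    have := h0.add h2
    rw [add_zero] at this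
    refine this.congr fun y => ?_
    ring
  have hcomp : Tendsto (fun z : ℝ => (1 + z^2) * Real.exp z) atBot (nhds 0) := by
    refine (hup.comp tendsto_neg_atBot_atTop).congr fun z => ?_
    simp [Function.comp]
  apply squeeze_zero_norm' ?_ hcomp
  filter_upwards [eventually_le_atBot (-2:ℝ)] with z hz
  have h1 : (0:ℝ) < 1 + z^2 := by positivity
  rw [Real.norm_eq_abs, abs_mul, abs_of_pos h1, abs_of_pos (stdG_pos z)]
  exact mul_le_mul le_rfl (stdG_le_exp hz) (stdG_pos z).le h1.le

lemma tendsto_mul_normalPDF_atBot : Tendsto (fun z : ℝ => z * normalPDF 0 1 z) atBot (nhds 0) := by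
  have hup : Tendsto (fun y : ℝ => y ^ 1 * Real.exp (-y)) atTop (nhds 0) :=
    Real.tendsto_pow_mul_exp_neg_atTop_nhds_zero 1
  have hcomp : Tendsto (fun z : ℝ => -z * Real.exp z) atBot (nhds 0) := by
    refine (hup.comp tendsto_neg_atBot_atTop).congr fun z => ?_
    simp [Function.comp]
  apply squeeze_zero_norm' ?_ hcomp
  filter_upwards [eventually_le_atBot (-2:ℝ)] with z hz
  have hz0 : z < 0 := by linarith
  rw [Real.norm_eq_abs, abs_mul, abs_of_neg hz0, abs_of_pos (normalPDF_pos 0 1 z one_pos)]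
  exact mul_le_mul le_rfl (normalPDF_le_exp hz) (normalPDF_pos 0 1 z one_pos).le (by linarith)

lemma millsB_pos (z : ℝ) : 0 < (1 + z^2) * stdG z + z * normalPDF 0 1 z := by
  set B : ℝ → ℝ := fun z => (1 + z^2) * stdG z + z * normalPDF 0 1 z with hB
  have hder : ∀ y, HasDerivAt B (2 * (normalPDF 0 1 y + y * stdG y)) y := by
    intro y
    have h1 := ((hasDerivAt_pow 2 y).const_add 1).mul (hasDerivAt_stdG y)
    have h2 := (hasDerivAt_id y).mul (hasDerivAt_normalPDF 0 1 y one_pos)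
    refine (h1.add h2).congr_deriv (Eq.symm ?_)
    push_cast
    norm_num
    ring
  have hmono : StrictMono B := by
    apply strictMono_of_deriv_pos
    intro y; rw [(hder y).deriv]
    have := millsA_pos y
    linarith
  have htends : Tendsto B atBot (nhds 0) := by
    have := tendsto_sq_stdG_atBot.add tendsto_mul_normalPDF_atBot
    simpa using this
  exact pos_of_strictMono_tendsto hmono htends z

/-- `gtil z = z Φ(z) e^{z²/2}`, strictly monotone. -/
noncomputable def gtil (z : ℝ) : ℝ := z * stdG z * Real.exp (z^2/2)

lemma hasDerivAt_gtil (y : ℝ) :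
    HasDerivAt gtil (((1 + y^2) * stdG y + y * normalPDF 0 1 y) * Real.exp (y^2/2)) y := by
  have h1 : HasDerivAt (fun t : ℝ => t * stdG t) (1 * stdG y + y * normalPDF 0 1 y) y :=
    (hasDerivAt_id y).mul (hasDerivAt_stdG y)
  have h2 := ((hasDerivAt_pow 2 y).div_const 2).exp
  have h3 := h1.mul h2
  refine h3.congr_deriv (Eq.symm ?_)
  push_cast
  norm_num
  ring

lemma gtil_strictMono : StrictMono gtil := by
  apply strictMono_of_deriv_pos
  intro y
  rw [(hasDerivAt_gtil y).deriv]
  exact mul_pos (millsB_pos y) (Real.exp_pos _)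

lemma sqrt2pi_exp_mul (z : ℝ) :
    Real.sqrt (2*Real.pi) * Real.exp (z^2/2) = (normalPDF 0 1 z)⁻¹ := by
  rw [normalPDF, mul_one, mul_inv, inv_inv, ← Real.exp_neg]
  congr 1
  ring

/-- the Mills-type ratio for `N(m,v)`. -/
noncomputable def uu (v m x : ℝ) : ℝ :=
  Real.sqrt v * stdG ((x - m)/Real.sqrt v) / normalPDF 0 1 ((x - m)/Real.sqrt v)

lemma uu_pos (v m x : ℝ) (hv : 0 < v) : 0 < uu v m x :=
  div_pos (mul_pos (Real.sqrt_pos.2 hv) (stdG_pos _)) (normalPDF_pos 0 1 _ one_pos)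

lemma hasDerivAt_uu (v m : ℝ) (hv : 0 < v) (x : ℝ) :
    HasDerivAt (uu v m) (1 + Real.sqrt (2*Real.pi) * gtil ((x - m)/Real.sqrt v)) x := by
  set s := Real.sqrt v with hs
  have hs0 : 0 < s := Real.sqrt_pos.2 hv
  set z := (x - m)/s with hzdef
  have hφ : 0 < normalPDF 0 1 z := normalPDF_pos 0 1 z one_pos
  have hz : HasDerivAt (fun x : ℝ => (x - m)/s) (1/s) x := by
    simpa using ((hasDerivAt_id x).sub_const m).div_const s
  have hnum : HasDerivAt (fun x : ℝ => s * stdG ((x - m)/s))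
      ((normalPDF 0 1 z * (1/s)) * s) x := by
    exact (((hasDerivAt_stdG z).comp x hz)).const_mul s |>.congr_deriv (show _ = (normalPDF 0 1 z * (1/s)) * s by ring)
  have hden : HasDerivAt (fun x : ℝ => normalPDF 0 1 ((x - m)/s))
      ((-((z - 0) / 1) * normalPDF 0 1 z) * (1/s)) x :=
    (hasDerivAt_normalPDF 0 1 z one_pos).comp (h₂ := normalPDF 0 1) x hz
  have hdiv := hnum.div hden hφ.ne'
  have : uu v m = fun x => s * stdG ((x - m)/s) / normalPDF 0 1 ((x - m)/s) := rfl
  rw [this]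
  refine hdiv.congr_deriv (Eq.symm ?_)
  rw [← hzdef]
  rw [gtil]
  have key := sqrt2pi_exp_mul z
  have h2 : Real.sqrt (2*Real.pi) * (z * stdG z * Real.exp (z^2/2))
      = z * stdG z * (normalPDF 0 1 z)⁻¹ := by
    rw [← key]; ring
  rw [h2]
  field_simp
  ring

lemma uu_lt (v m x : ℝ) (hv : 0 < v) (hx : x < m) : uu v m x < v / (m - x) := by
  set s := Real.sqrt v with hs
  have hs0 : 0 < s := Real.sqrt_pos.2 hv
  set z := (x - m)/s with hzdef
  have hz0 : z < 0 := div_neg_of_neg_of_pos (by linarith) hs0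
  have hφ : 0 < normalPDF 0 1 z := normalPDF_pos 0 1 z one_pos
  have hA := millsA_pos z
  have hkey : stdG z * (-z) < normalPDF 0 1 z := by nlinarith
  have h1 : uu v m x = s * stdG z / normalPDF 0 1 z := rfl
  rw [h1]
  have h2 : v / (m - x) = s / (-z) := by
    have hzz : -z = (m - x)/s := by rw [hzdef]; ring
    rw [hzz, div_div_eq_mul_div, Real.mul_self_sqrt hv.le]
  rw [h2, div_lt_div_iff₀ hφ (by linarith : (0:ℝ) < -z)]
  nlinarith [mul_lt_mul_of_pos_left hkey hs0]

lemma tendsto_uu_atBot (v m : ℝ) (hv : 0 < v) : Tendsto (uu v m) atBot (nhds 0) := by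
  have hb : Tendsto (fun x : ℝ => v * (m - x)⁻¹) atBot (nhds 0) := by
    have h1 : Tendsto (fun x : ℝ => m - x) atBot atTop := by
      have h0 : Tendsto (fun x : ℝ => -x) atBot atTop := tendsto_neg_atBot_atTop
      simpa [sub_eq_add_neg] using tendsto_atTop_add_const_left atBot m h0
    have h2 := h1.inv_tendsto_atTop
    have := h2.const_mul v
    simpa using this
  apply squeeze_zero' (Eventually.of_forall fun x => (uu_pos v m x hv).le) ?_ hb
  filter_upwards [eventually_lt_atBot m] with x hx
  rw [← div_eq_mul_inv]
  exact (uu_lt v m x hv hx).le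

lemma tendsto_quadratic (a k c : ℝ) (ha : 0 < a) :
    Tendsto (fun x : ℝ => a * x^2 + k * x + c) atTop atTop := by
  have heq : ∀ x : ℝ, a * x^2 + k * x + c = a * (x + k/(2*a))^2 + (c - k^2/(4*a)) := by
    intro x; field_simp; ring
  have h1 : Tendsto (fun x : ℝ => x + k/(2*a)) atTop atTop :=
    tendsto_atTop_add_const_right _ _ tendsto_id
  have h2 : Tendsto (fun y : ℝ => y^2) atTop atTop := tendsto_pow_atTop two_ne_zero
  have h3 := (h2.comp h1).const_mul_atTop ha
  have h4 := tendsto_atTop_add_const_right atTop (c - k^2/(4*a)) h3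
  exact h4.congr fun x => by simp only [Function.comp_apply]; rw [← heq x]

set_option maxHeartbeats 1000000 in
lemma engine (v1 v2 m : ℝ) (hv1 : 0 < v1) (h12 : v1 < v2) :
    ∃! x : ℝ, uu v1 0 x - uu v2 m x = 0 := by
  have hv2 : 0 < v2 := hv1.trans h12
  set s1 := Real.sqrt v1 with hs1def
  set s2 := Real.sqrt v2 with hs2def
  have hs1 : 0 < s1 := Real.sqrt_pos.2 hv1
  have hs2 : 0 < s2 := Real.sqrt_pos.2 hv2
  have hs12 : s1 < s2 := Real.sqrt_lt_sqrt hv1.le h12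
  set F := fun x : ℝ => uu v1 0 x - uu v2 m x with hFdef
  have hF : ∀ x, HasDerivAt F
      (Real.sqrt (2*Real.pi) * (gtil ((x - 0)/s1) - gtil ((x - m)/s2))) x := by
    intro x
    have h := (hasDerivAt_uu v1 0 hv1 x).sub (hasDerivAt_uu v2 m hv2 x)
    refine h.congr_deriv (Eq.symm ?_)
    ring
  have hcont : Continuous F :=
    continuous_iff_continuousAt.2 fun x => (hF x).continuousAt
  set ξ := -m * s1 / (s2 - s1) with hξdef
  have hzsign : ∀ x, ξ < x → (x - m)/s2 < (x - 0)/s1 := by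
    intro x hx
    rw [div_lt_div_iff₀ hs2 hs1]
    rw [hξdef, div_lt_iff₀ (by linarith : (0:ℝ) < s2 - s1)] at hx
    nlinarith
  have hzsign' : ∀ x, x < ξ → (x - 0)/s1 < (x - m)/s2 := by
    intro x hx
    rw [div_lt_div_iff₀ hs1 hs2]
    rw [hξdef, lt_div_iff₀ (by linarith : (0:ℝ) < s2 - s1)] at hx
    nlinarith
  have hs2pi : 0 < Real.sqrt (2*Real.pi) := Real.sqrt_pos.2 (by positivity)
  have hmonoOn : StrictMonoOn F (Set.Ici ξ) := by
    apply strictMonoOn_of_deriv_pos (convex_Ici ξ) hcont.continuousOn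
    intro x hx
    rw [interior_Ici] at hx
    rw [(hF x).deriv]
    exact mul_pos hs2pi (sub_pos.2 (gtil_strictMono (hzsign x hx)))
  have hantiOn : StrictAntiOn F (Set.Iic ξ) := by
    apply strictAntiOn_of_deriv_neg (convex_Iic ξ) hcont.continuousOn
    intro x hx
    rw [interior_Iic] at hx
    rw [(hF x).deriv]
    exact mul_neg_of_pos_of_neg hs2pi (sub_neg.2 (gtil_strictMono (hzsign' x hx)))
  have htends : Tendsto F atBot (nhds 0) := by
    have := (tendsto_uu_atBot v1 0 hv1).sub (tendsto_uu_atBot v2 m hv2)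
    simpa using this
  have hneg : ∀ x ≤ ξ, F x < 0 := by
    have hle : ∀ y ≤ ξ, F y ≤ 0 := by
      intro y hy
      apply ge_of_tendsto htends
      filter_upwards [eventually_lt_atBot y] with w hw
      exact (hantiOn (Set.mem_Iic.2 (by linarith)) hy hw).le
    intro x hx
    have h1 : F x < F (x - 1) :=
      hantiOn (Set.mem_Iic.2 (by linarith)) hx (sub_one_lt x)
    have h2 : F (x - 1) ≤ 0 := hle _ (by linarith)
    linarith
  -- positive point
  set c₀ := stdG 0 with hc₀def
  have hc₀ : 0 < c₀ := stdG_pos 0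
  have ha : (0:ℝ) < 1/(2*v1) - 1/(2*v2) := by
    rw [sub_pos, div_lt_div_iff₀ (by linarith) (by linarith)]
    nlinarith
  have hEeq : ∀ x : ℝ, (1/(2*v1) - 1/(2*v2)) * x^2 + (m/v2) * x + (-(m^2)/(2*v2))
      = (x/s1)^2/2 - ((x - m)/s2)^2/2 := by
    intro x
    rw [div_pow, div_pow, Real.sq_sqrt hv1.le, Real.sq_sqrt hv2.le]
    field_simp
    ring
  have htop : Tendsto
      (fun x : ℝ => c₀ * (s1/s2) * Real.exp ((x/s1)^2/2 - ((x - m)/s2)^2/2)) atTop atTop := by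
    have h1 := tendsto_quadratic (1/(2*v1) - 1/(2*v2)) (m/v2) (-(m^2)/(2*v2)) ha
    have h2 := Real.tendsto_exp_atTop.comp h1
    have h3 : Tendsto (fun x : ℝ => Real.exp ((x/s1)^2/2 - ((x - m)/s2)^2/2)) atTop atTop :=
      h2.congr fun x => by rw [Function.comp_apply, hEeq x]
    exact h3.const_mul_atTop (by positivity)
  obtain ⟨x1, hx1big, hx1pos, hx1ξ⟩ :
      ∃ x1 : ℝ, 1 < c₀ * (s1/s2) * Real.exp ((x1/s1)^2/2 - ((x1 - m)/s2)^2/2)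
        ∧ 0 ≤ x1 ∧ ξ < x1 := by
    have h := (htop.eventually_gt_atTop 1).and ((eventually_ge_atTop (0:ℝ)).and
      (eventually_gt_atTop ξ))
    obtain ⟨x1, h1, h2, h3⟩ := h.exists
    exact ⟨x1, h1, h2, h3⟩
  have huu1 : uu v1 0 x1 = s1 * stdG (x1/s1) / normalPDF 0 1 (x1/s1) := by
    rw [uu]; norm_num; rfl
  have huu2 : uu v2 m x1 = s2 * stdG ((x1 - m)/s2) / normalPDF 0 1 ((x1 - m)/s2) := rfl
  have hFx1 : 0 < F x1 := by
    have hφ1 : 0 < normalPDF 0 1 (x1/s1) := normalPDF_pos 0 1 _ one_pos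
    have hφ2 : 0 < normalPDF 0 1 ((x1 - m)/s2) := normalPDF_pos 0 1 _ one_pos
    have hstdG1 : c₀ ≤ stdG (x1/s1) := stdG_mono (div_nonneg hx1pos hs1.le)
    have hstdG2 : stdG ((x1 - m)/s2) ≤ 1 := stdG_le_one _
    have hkey : s2 < c₀ * s1 * Real.exp ((x1/s1)^2/2 - ((x1 - m)/s2)^2/2) := by
      have h := mul_lt_mul_of_pos_left hx1big hs2
      rw [mul_one] at h
      calc s2 < s2 * (c₀ * (s1/s2) * Real.exp ((x1/s1)^2/2 - ((x1 - m)/s2)^2/2)) := h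
        _ = c₀ * s1 * Real.exp ((x1/s1)^2/2 - ((x1 - m)/s2)^2/2) := by
            field_simp
    have hkey2 : s2 * Real.exp (-((x1/s1)^2)/2)
        < c₀ * s1 * Real.exp (-(((x1 - m)/s2)^2)/2) := by
      have h := mul_lt_mul_of_pos_right hkey (Real.exp_pos (-((x1/s1)^2)/2))
      rw [mul_assoc, ← Real.exp_add] at h
      calc s2 * Real.exp (-((x1/s1)^2)/2) < _ := h
        _ = c₀ * s1 * Real.exp (-(((x1 - m)/s2)^2)/2) := by
            congr 1
            ring
    have hφ1eq : normalPDF 0 1 (x1/s1)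
        = (Real.sqrt (2*Real.pi))⁻¹ * Real.exp (-((x1/s1)^2)/2) := by
      rw [normalPDF, mul_one]
      congr 1
      ring
    have hφ2eq : normalPDF 0 1 ((x1 - m)/s2)
        = (Real.sqrt (2*Real.pi))⁻¹ * Real.exp (-(((x1 - m)/s2)^2)/2) := by
      rw [normalPDF, mul_one]
      congr 1
      ring
    have hnum : 0 < s1 * stdG (x1/s1) * normalPDF 0 1 ((x1 - m)/s2)
        - s2 * stdG ((x1 - m)/s2) * normalPDF 0 1 (x1/s1) := by
      rw [hφ1eq, hφ2eq]
      have hinv : (0:ℝ) < (Real.sqrt (2*Real.pi))⁻¹ := by positivity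
      set K := (Real.sqrt (2*Real.pi))⁻¹ with hK
      set S1 := stdG (x1/s1) with hS1
      set S2 := stdG ((x1 - m)/s2) with hS2
      set E1 := Real.exp (-(((x1 - m)/s2)^2)/2) with hE1
      set E2 := Real.exp (-((x1/s1)^2)/2) with hE2
      have e1 : (0:ℝ) < E1 := Real.exp_pos _
      have e2 : (0:ℝ) < E2 := Real.exp_pos _
      have b1 : c₀ * E1 ≤ S1 * E1 := mul_le_mul_of_nonneg_right hstdG1 e1.le
      have b2 : S2 * E2 ≤ 1 * E2 := mul_le_mul_of_nonneg_right hstdG2 e2.le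
      have c1 := mul_le_mul_of_nonneg_left b1 hs1.le
      have c2 := mul_le_mul_of_nonneg_left b2 hs2.le
      have c3 : 0 < s1 * S1 * E1 - s2 * S2 * E2 := by nlinarith [c1, c2, hkey2]
      nlinarith [mul_pos hinv c3]
    have hFeq : F x1 = (s1 * stdG (x1/s1) * normalPDF 0 1 ((x1 - m)/s2)
        - s2 * stdG ((x1 - m)/s2) * normalPDF 0 1 (x1/s1))
        / (normalPDF 0 1 (x1/s1) * normalPDF 0 1 ((x1 - m)/s2)) := by
      rw [hFdef]
      show uu v1 0 x1 - uu v2 m x1 = _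
      rw [huu1, huu2]
      field_simp
    rw [hFeq]
    exact div_pos hnum (mul_pos hφ1 hφ2)
  -- existence and uniqueness
  have hκ : F ξ < 0 := hneg ξ le_rfl
  have hsub := intermediate_value_Ioo hx1ξ.le hcont.continuousOn
  obtain ⟨α, hαmem, hα0⟩ := hsub ⟨hκ, hFx1⟩
  refine ⟨α, hα0, ?_⟩
  intro y hy
  have hyξ : ξ < y := by
    by_contra h
    push_neg at h
    exact absurd hy (ne_of_lt (hneg y h))
  have hFy : F y = F α := by
    show uu v1 0 y - uu v2 m y = F α
    rw [hy, hα0]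
  exact hmonoOn.injOn (Set.mem_Ici.2 hyξ.le) (Set.mem_Ici.2 hαmem.1.le) hFy

lemma H_pos {γ : Type*} [Fintype γ] (P : γ → ℝ) (hP : IsProb P) (hV : 0 < V P) :
    0 < H P := by
  unfold V at hV
  unfold H at hV ⊢
  obtain ⟨hnn, hsum⟩ := hP
  have hle1 : ∀ x, P x ≤ 1 := by
    intro x
    calc P x ≤ ∑ y, P y := Finset.single_le_sum (fun y _ => hnn y) (Finset.mem_univ x)
      _ = 1 := hsum
  have hterm : ∀ x, 0 ≤ -(P x * Real.log (P x)) := by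
    intro x
    rcases eq_or_lt_of_le (hnn x) with h|h
    · simp [← h]
    · have hl := Real.log_nonpos (hnn x) (hle1 x)
      nlinarith
  have hHnn : 0 ≤ ∑ x, -(P x * Real.log (P x)) :=
    Finset.sum_nonneg fun x _ => hterm x
  rcases eq_or_lt_of_le hHnn with h0|h
  · exfalso
    have hzero : ∀ x ∈ Finset.univ, -(P x * Real.log (P x)) = 0 :=
      (Finset.sum_eq_zero_iff_of_nonneg (fun x _ => hterm x)).1 h0.symm
    have hV0 : ∑ x, P x * (-Real.log (P x) - ∑ y, -(P y * Real.log (P y))) ^ 2 = 0 := by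
      apply Finset.sum_eq_zero
      intro x _
      rcases eq_or_lt_of_le (hnn x) with h|hpos
      · rw [← h]; ring
      · have hlog : Real.log (P x) = 0 := by
          have hz := hzero x (Finset.mem_univ x)
          have hPl : P x * Real.log (P x) = 0 := by linarith
          rcases mul_eq_zero.1 hPl with h'|h'
          · exact absurd h'.symm hpos.ne
          · exact h'
        rw [hlog, ← h0]
        ring
    rw [hV0] at hV
    exact lt_irrefl 0 hV
  · exact h

end AuxUnique


set_option maxHeartbeats 1000000 in
/-- in the case `H(P)/V(P) > H(Q)/V(Q)`, the equation
`N_P(x)/N_{P,Q,b}(x) = G_P(x)/G_{P,Q,b}(x)` has a unique real solution. -/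
theorem unique_threshold_alpha {X Y : Type*} [Fintype X] [Fintype Y]
    (P : X → ℝ) (Q : Y → ℝ) (hP : IsProb P) (hQ : IsProb Q)
    (hVP : 0 < V P) (hVQ : 0 < V Q)
    (hratio : H Q / V Q < H P / V P) (b : ℝ) :
    ∃! x : ℝ, NP P x / NPQ P Q b x = GP P x / GPQ P Q b x := by
  have hHP : 0 < H P := H_pos P hP hVP
  have hHQ : 0 < H Q := H_pos Q hQ hVQ
  set v1 := V P with hv1def
  set v2 := H P / H Q * V Q with hv2def
  have hv2 : 0 < v2 := mul_pos (div_pos hHP hHQ) hVQ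
  have h12 : v1 < v2 := by
    rw [div_lt_div_iff₀ hVQ hVP] at hratio
    rw [hv2def, div_mul_eq_mul_div, lt_div_iff₀ hHQ, hv1def]
    nlinarith
  set m := H Q * b with hmdef
  have hid1 : ∀ x, GP P x / NP P x = uu v1 0 x := by
    intro x
    have hNP : NP P x = normalPDF 0 1 ((x - 0)/Real.sqrt v1) / Real.sqrt v1 :=
      normalPDF_scale 0 v1 x hVP
    have hGP : GP P x = stdG ((x - 0)/Real.sqrt v1) := by
      rw [show GP P x = stdG (x/Real.sqrt v1) from rfl, sub_zero]
    have huu : uu v1 0 x = Real.sqrt v1 * stdG ((x - 0)/Real.sqrt v1)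
        / normalPDF 0 1 ((x - 0)/Real.sqrt v1) := rfl
    rw [hNP, hGP, huu, div_div_eq_mul_div]
    ring
  have hid2 : ∀ x, GPQ P Q b x / NPQ P Q b x = uu v2 m x := by
    intro x
    have hNPQ : NPQ P Q b x = normalPDF 0 1 ((x - m)/Real.sqrt v2) / Real.sqrt v2 :=
      normalPDF_scale m v2 x hv2
    have hGPQ : GPQ P Q b x = stdG ((x - m)/Real.sqrt v2) := by
      have hv2inv : H Q/(H P * V Q) = v2⁻¹ := by
        rw [hv2def]
        field_simp
      have harg : Real.sqrt (H Q/(H P * V Q)) * (x - H Q * b) = (x - m)/Real.sqrt v2 := by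
        rw [hv2inv, Real.sqrt_inv, inv_mul_eq_div, hmdef]
      rw [show GPQ P Q b x
        = stdG (Real.sqrt (H Q/(H P * V Q)) * (x - H Q * b)) from rfl, harg]
    have huu : uu v2 m x = Real.sqrt v2 * stdG ((x - m)/Real.sqrt v2)
        / normalPDF 0 1 ((x - m)/Real.sqrt v2) := rfl
    rw [hNPQ, hGPQ, huu, div_div_eq_mul_div]
    ring
  have hiff : ∀ x, (NP P x / NPQ P Q b x = GP P x / GPQ P Q b x)
      ↔ (uu v1 0 x - uu v2 m x = 0) := by
    intro x
    have hNPpos : 0 < NP P x := normalPDF_pos 0 v1 x hVP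
    have hNPQpos : 0 < NPQ P Q b x := normalPDF_pos m v2 x hv2
    have hGPpos : 0 < GP P x := stdG_pos _
    have hGPQpos : 0 < GPQ P Q b x := stdG_pos _
    rw [← hid1 x, ← hid2 x, sub_eq_zero]
    rw [div_eq_div_iff hNPQpos.ne' hGPQpos.ne',
        div_eq_div_iff hNPpos.ne' hNPQpos.ne']
    constructor
    · intro h; nlinarith [h]
    · intro h; nlinarith [h]
  obtain ⟨α, hα, huniq⟩ := engine v1 v2 m hVP h12
  exact ⟨α, (hiff α).2 hα, fun y hy => huniq y ((hiff y).1 hy)⟩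


end RNG
end
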